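/- arXiv:math/9402210 — 10 statements merged into one kernel-verified Lean document; each statement's English description precedes it below -/
import Mathlib

section
/- If f is Bochner integrable from a probability space (Ω, F, μ) into a Banach space E, then for each ε > 0 and each measurable set B with μ(B) > 0, there exists a measurable subset A ⊆ B with μ(A) > 0 such that every measurable subset A₀ of A satisfies Bocce-osc f|_{A₀} < ε. -/
open MeasureTheory Filter Topology

/-- The average value of `f` over `A`. -/
noncomputable def avg {Ω E : Type*} [MeasurableSpace Ω] [NormedAddCommGroup E]
    [NormedSpace ℝ E] (μ : Measure Ω) (f : Ω → E) (A : Set Ω) : E :=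
  (μ A).toReal⁻¹ • ∫ ω in A, f ω ∂μ

/-- The Bocce oscillation of `f` over `A`. -/
noncomputable def bocce {Ω E : Type*} [MeasurableSpace Ω] [NormedAddCommGroup E]
    [NormedSpace ℝ E] (μ : Measure Ω) (f : Ω → E) (A : Set Ω) : ℝ :=
  (∫ ω in A, ‖f ω - avg μ f A‖ ∂μ) / (μ A).toReal

theorem exists_small_bocce_subset {Ω E : Type*} [MeasurableSpace Ω] [NormedAddCommGroup E]
    [NormedSpace ℝ E] [CompleteSpace E] (μ : Measure Ω) [IsProbabilityMeasure μ]
    (f : Ω → E) (hf : Integrable f μ)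
    (ε : ℝ) (hε : 0 < ε) (B : Set Ω) (hB : MeasurableSet B) (hB0 : 0 < μ B) :
    ∃ A ⊆ B, MeasurableSet A ∧ 0 < μ A ∧
      ∀ A₀ ⊆ A, MeasurableSet A₀ → bocce μ f A₀ < ε := by
  set δ : ℝ := ε / 3 with hδdef
  have hδ : 0 < δ := by positivity
  set g := hf.1.mk f with hgdef
  have hg : StronglyMeasurable g := hf.1.stronglyMeasurable_mk
  have hfg : f =ᵐ[μ] g := hf.1.ae_eq_mk
  obtain ⟨s, hs_count, hs_sub⟩ := hg.isSeparable_range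
  -- cover B by the sets where g is δ-close to a point of s
  have hcover : B ⊆ ⋃ x ∈ s, {ω | ‖g ω - x‖ < δ} := by
    intro ω _
    have hω : g ω ∈ closure s := hs_sub (Set.mem_range_self ω)
    rcases Metric.mem_closure_iff.1 hω δ hδ with ⟨x, hxs, hx⟩
    simp only [Set.mem_iUnion, Set.mem_setOf_eq]
    exact ⟨x, hxs, by rwa [dist_eq_norm] at hx⟩
  have hmeas : ∀ x : E, MeasurableSet {ω | ‖g ω - x‖ < δ} := by
    intro x
    have : Measurable fun ω => ‖g ω - x‖ := ((hg.sub stronglyMeasurable_const).norm).measurable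
    exact this measurableSet_Iio
  have hx : ∃ x ∈ s, 0 < μ (B ∩ {ω | ‖g ω - x‖ < δ}) := by
    by_contra h
    push_neg at h
    have h0 : ∀ x ∈ s, μ (B ∩ {ω | ‖g ω - x‖ < δ}) = 0 := fun x hx =>
      le_antisymm (h x hx) zero_le
    have : μ B = 0 := by
      have hsub : B ⊆ ⋃ x ∈ s, B ∩ {ω | ‖g ω - x‖ < δ} := by
        intro ω hω
        rcases Set.mem_iUnion₂.1 (hcover hω) with ⟨x, hxs, hxω⟩
        exact Set.mem_iUnion₂.2 ⟨x, hxs, hω, hxω⟩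
      refine measure_mono_null hsub ?_
      exact (measure_biUnion_null_iff hs_count).2 h0
    exact absurd this hB0.ne'
  obtain ⟨x, -, hxpos⟩ := hx
  refine ⟨B ∩ {ω | ‖g ω - x‖ < δ}, Set.inter_subset_left, hB.inter (hmeas x), hxpos, ?_⟩
  intro A₀ hA₀sub hA₀meas
  rcases eq_or_lt_of_le (zero_le : 0 ≤ μ A₀) with h0 | hpos
  · -- measure zero: bocce = 0
    have : μ.restrict A₀ = 0 := by
      rw [Measure.restrict_eq_zero]; exact h0.symm
    simp [bocce, this, hε]
  · have hfin : μ A₀ < ⊤ := measure_lt_top μ A₀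
    have hmR : 0 < (μ A₀).toReal := ENNReal.toReal_pos hpos.ne' hfin.ne
    set mR := (μ A₀).toReal with hmRdef
    -- a.e. on A₀, ‖f ω - x‖ ≤ δ
    have hae : ∀ᵐ ω ∂μ.restrict A₀, ‖f ω - x‖ ≤ δ := by
      rw [ae_restrict_iff' hA₀meas]
      filter_upwards [hfg] with ω hω hωA₀
      have : ‖g ω - x‖ < δ := (hA₀sub hωA₀).2
      rw [hω]; exact this.le
    have hint_fx : Integrable (fun ω => f ω - x) (μ.restrict A₀) :=
      ((hf.sub (integrable_const x)).restrict)
    have hint_nfx : Integrable (fun ω => ‖f ω - x‖) (μ.restrict A₀) := hint_fx.norm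
    have hIbound : ∫ ω in A₀, ‖f ω - x‖ ∂μ ≤ δ * mR := by
      calc ∫ ω in A₀, ‖f ω - x‖ ∂μ ≤ ∫ _ω in A₀, δ ∂μ :=
            integral_mono_ae hint_nfx (integrable_const δ) hae
        _ = δ * mR := by
            rw [setIntegral_const, smul_eq_mul, mul_comm]
            rfl
    -- bound on distance from average to x
    have havg : ‖avg μ f A₀ - x‖ ≤ δ := by
      have h1 : avg μ f A₀ - x = mR⁻¹ • ∫ ω in A₀, (f ω - x) ∂μ := by
        rw [integral_sub hf.restrict (integrable_const x), smul_sub]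
        have h2 : ∫ _ω in A₀, x ∂μ = mR • x := by
          rw [setIntegral_const]
          rfl
        rw [h2, smul_smul, inv_mul_cancel₀ hmR.ne', one_smul, avg]
      rw [h1]
      calc ‖mR⁻¹ • ∫ ω in A₀, (f ω - x) ∂μ‖ = mR⁻¹ * ‖∫ ω in A₀, (f ω - x) ∂μ‖ := by
            rw [norm_smul, Real.norm_eq_abs, abs_of_pos (inv_pos.2 hmR)]
        _ ≤ mR⁻¹ * ∫ ω in A₀, ‖f ω - x‖ ∂μ := by
            gcongr
            exact norm_integral_le_integral_norm _
        _ ≤ mR⁻¹ * (δ * mR) := by gcongr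
        _ = δ := by field_simp
    -- final bound on bocce
    have hint_favg : Integrable (fun ω => ‖f ω - avg μ f A₀‖) (μ.restrict A₀) :=
      ((hf.sub (integrable_const _)).restrict).norm
    have hIbound2 : ∫ ω in A₀, ‖f ω - avg μ f A₀‖ ∂μ ≤ 2 * δ * mR := by
      have hptwise : ∀ᵐ ω ∂μ.restrict A₀, ‖f ω - avg μ f A₀‖ ≤ ‖f ω - x‖ + δ := by
        filter_upwards with ω
        have ht : ‖f ω - avg μ f A₀‖ ≤ ‖f ω - x‖ + ‖x - avg μ f A₀‖ :=
          norm_sub_le_norm_sub_add_norm_sub (f ω) x (avg μ f A₀)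
        have hr : ‖x - avg μ f A₀‖ = ‖avg μ f A₀ - x‖ := norm_sub_rev _ _
        linarith [havg]
      calc ∫ ω in A₀, ‖f ω - avg μ f A₀‖ ∂μ ≤ ∫ ω in A₀, (‖f ω - x‖ + δ) ∂μ :=
            integral_mono_ae hint_favg (hint_nfx.add (integrable_const δ)) hptwise
        _ = (∫ ω in A₀, ‖f ω - x‖ ∂μ) + ∫ _ω in A₀, δ ∂μ :=
            integral_add hint_nfx (integrable_const δ)
        _ ≤ δ * mR + δ * mR := by
            gcongr
            rw [setIntegral_const, smul_eq_mul, mul_comm]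
            exact le_rfl
        _ = 2 * δ * mR := by ring
    have hfinal : bocce μ f A₀ ≤ 2 * δ := by
      rw [bocce, div_le_iff₀ hmR]
      exact hIbound2
    calc bocce μ f A₀ ≤ 2 * δ := hfinal
      _ < ε := by rw [hδdef]; linarith
end

section
/- If a sequence (f_k) in L¹(μ, E) converges in L¹-norm to f₀, then (f_k) satisfies the sequential Bocce criterion. -/
open MeasureTheory Filter Topology

/-- The sequential Bocce criterion. -/
def SeqBocceCriterion {Ω E : Type*} [MeasurableSpace Ω] [NormedAddCommGroup E]
    [NormedSpace ℝ E] (μ : Measure Ω) (f : ℕ → Ω → E) : Prop :=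
  ∀ k : ℕ → ℕ, StrictMono k → ∀ ε : ℝ, 0 < ε → ∀ B : Set Ω, MeasurableSet B → 0 < μ B →
    ∃ A ⊆ B, MeasurableSet A ∧ 0 < μ A ∧
      Filter.liminf (fun j => bocce μ (f (k j)) A) Filter.atTop < ε

section Aux

variable {Ω E : Type*} [MeasurableSpace Ω] [NormedAddCommGroup E] [NormedSpace ℝ E]
  [CompleteSpace E] {μ : Measure Ω}

lemma bocce_nonneg (f : Ω → E) (A : Set Ω) : 0 ≤ bocce μ f A :=
  div_nonneg (integral_nonneg fun _ => norm_nonneg _) ENNReal.toReal_nonneg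

lemma norm_avg_sub_avg_le {h h₀ : Ω → E} (hh : Integrable h μ) (hh₀ : Integrable h₀ μ)
    (A : Set Ω) :
    ‖avg μ h₀ A - avg μ h A‖ ≤ (μ A).toReal⁻¹ * ∫ ω in A, ‖h₀ ω - h ω‖ ∂μ := by
  rw [avg, avg, ← smul_sub, ← integral_sub hh₀.integrableOn hh.integrableOn, norm_smul,
    Real.norm_eq_abs, abs_inv, abs_of_nonneg ENNReal.toReal_nonneg]
  exact mul_le_mul_of_nonneg_left (norm_integral_le_integral_norm _) (by positivity)

lemma bocce_le_bocce_add {h h₀ : Ω → E} (hh : Integrable h μ) (hh₀ : Integrable h₀ μ)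
    {A : Set Ω} (hA : MeasurableSet A) (hApos : 0 < μ A) (hAfin : μ A ≠ ⊤) :
    bocce μ h A ≤ bocce μ h₀ A + 2 * (∫ ω in A, ‖h ω - h₀ ω‖ ∂μ) / (μ A).toReal := by
  set a := (μ A).toReal with ha
  have hapos : 0 < a := ENNReal.toReal_pos hApos.ne' hAfin
  set J := ∫ ω in A, ‖h ω - h₀ ω‖ ∂μ with hJ
  set K := ∫ ω in A, ‖h₀ ω - avg μ h₀ A‖ ∂μ with hK
  have hint1 : IntegrableOn (fun ω => ‖h ω - h₀ ω‖) A μ :=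
    ((hh.sub hh₀).norm).integrableOn
  have hint2 : IntegrableOn (fun ω => ‖h₀ ω - avg μ h₀ A‖) A μ :=
    (hh₀.integrableOn.sub (integrableOn_const hAfin)).norm
  have hint3 : IntegrableOn (fun _ : Ω => ‖avg μ h₀ A - avg μ h A‖) A μ :=
    integrableOn_const hAfin
  have key : ∫ ω in A, ‖h ω - avg μ h A‖ ∂μ ≤ J + K + a * ‖avg μ h₀ A - avg μ h A‖ := by
    have step1 : ∫ ω in A, ‖h ω - avg μ h A‖ ∂μ ≤
        ∫ ω in A, (‖h ω - h₀ ω‖ + ‖h₀ ω - avg μ h₀ A‖ + ‖avg μ h₀ A - avg μ h A‖) ∂μ := by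
      refine setIntegral_mono_on
        (hh.integrableOn.sub (integrableOn_const hAfin)).norm
        ((hint1.add hint2).add hint3) hA (fun ω _ => ?_)
      have : h ω - avg μ h A =
          (h ω - h₀ ω) + (h₀ ω - avg μ h₀ A) + (avg μ h₀ A - avg μ h A) := by abel
      rw [this]
      exact norm_add₃_le
    have step2 : ∫ ω in A, (‖h ω - h₀ ω‖ + ‖h₀ ω - avg μ h₀ A‖ + ‖avg μ h₀ A - avg μ h A‖) ∂μ
        = J + K + a * ‖avg μ h₀ A - avg μ h A‖ := by
      have e1 : ∫ ω in A, (‖h ω - h₀ ω‖ + ‖h₀ ω - avg μ h₀ A‖ + ‖avg μ h₀ A - avg μ h A‖) ∂μ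
          = (∫ ω in A, (‖h ω - h₀ ω‖ + ‖h₀ ω - avg μ h₀ A‖) ∂μ)
            + ∫ _ in A, ‖avg μ h₀ A - avg μ h A‖ ∂μ := integral_add (hint1.add hint2) hint3
      have e2 : ∫ ω in A, (‖h ω - h₀ ω‖ + ‖h₀ ω - avg μ h₀ A‖) ∂μ = J + K :=
        integral_add hint1 hint2
      rw [e1, e2, setIntegral_const, smul_eq_mul]; rfl
    linarith
  have havg : a * ‖avg μ h₀ A - avg μ h A‖ ≤ J := by
    have hthis : ‖avg μ h A - avg μ h₀ A‖ ≤ (μ A).toReal⁻¹ * J :=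
      norm_avg_sub_avg_le hh₀ hh A
    calc a * ‖avg μ h₀ A - avg μ h A‖ = a * ‖avg μ h A - avg μ h₀ A‖ := by rw [norm_sub_rev]
      _ ≤ a * ((μ A).toReal⁻¹ * J) := mul_le_mul_of_nonneg_left hthis hapos.le
      _ = J := by rw [← ha]; field_simp
  have hI : ∫ ω in A, ‖h ω - avg μ h A‖ ∂μ ≤ K + 2 * J := by linarith
  calc bocce μ h A = (∫ ω in A, ‖h ω - avg μ h A‖ ∂μ) / a := rfl
    _ ≤ (K + 2 * J) / a := by gcongr
    _ = K / a + 2 * J / a := by ring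
    _ = bocce μ h₀ A + 2 * J / a := rfl

lemma bocce_le_of_ae {h₀ : Ω → E} (hh₀ : Integrable h₀ μ) {A : Set Ω}
    (hApos : 0 < μ A) (hAfin : μ A ≠ ⊤) {c : E} {r : ℝ}
    (hr : ∀ᵐ ω ∂μ.restrict A, ‖h₀ ω - c‖ ≤ r) : bocce μ h₀ A ≤ 2 * r := by
  set a := (μ A).toReal with ha
  have hapos : 0 < a := ENNReal.toReal_pos hApos.ne' hAfin
  have havg : ‖avg μ h₀ A - c‖ ≤ r := by
    have hc : avg μ h₀ A - c = a⁻¹ • ∫ ω in A, (h₀ ω - c) ∂μ := by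
      rw [integral_sub hh₀.integrableOn (integrableOn_const hAfin), smul_sub,
        setIntegral_const, measureReal_def, ← ha, smul_smul, inv_mul_cancel₀ hapos.ne', one_smul, avg]
    have hnorm : ‖avg μ h₀ A - c‖ ≤ a⁻¹ * ∫ ω in A, ‖h₀ ω - c‖ ∂μ := by
      rw [hc, norm_smul, Real.norm_eq_abs, abs_inv, abs_of_nonneg ENNReal.toReal_nonneg]
      exact mul_le_mul_of_nonneg_left (norm_integral_le_integral_norm _) (by positivity)
    have hle : ∫ ω in A, ‖h₀ ω - c‖ ∂μ ≤ a * r := by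
      calc ∫ ω in A, ‖h₀ ω - c‖ ∂μ ≤ ∫ _ in A, r ∂μ :=
            integral_mono_ae
              (hh₀.integrableOn.sub (integrableOn_const hAfin)).norm
              (integrableOn_const hAfin) hr
        _ = a * r := by rw [setIntegral_const, smul_eq_mul]; rfl
    calc ‖avg μ h₀ A - c‖ ≤ a⁻¹ * ∫ ω in A, ‖h₀ ω - c‖ ∂μ := hnorm
      _ ≤ a⁻¹ * (a * r) := mul_le_mul_of_nonneg_left hle (by positivity)
      _ = r := by field_simp
  have key : ∫ ω in A, ‖h₀ ω - avg μ h₀ A‖ ∂μ ≤ a * (2 * r) := by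
    calc ∫ ω in A, ‖h₀ ω - avg μ h₀ A‖ ∂μ ≤ ∫ _ in A, 2 * r ∂μ := by
          refine integral_mono_ae
            (hh₀.integrableOn.sub (integrableOn_const hAfin)).norm
            (integrableOn_const hAfin) ?_
          filter_upwards [hr] with ω hω
          calc ‖h₀ ω - avg μ h₀ A‖ ≤ ‖h₀ ω - c‖ + ‖c - avg μ h₀ A‖ := norm_sub_le_norm_sub_add_norm_sub _ _ _
            _ ≤ r + r := add_le_add hω (by rw [norm_sub_rev]; exact havg)
            _ = 2 * r := by ring
      _ = a * (2 * r) := by rw [setIntegral_const, smul_eq_mul]; rfl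
  rw [bocce, div_le_iff₀ hapos]
  linarith [key]

lemma exists_small_osc {f₀ : Ω → E} (hf₀ : Integrable f₀ μ) {B : Set Ω}
    (hB : MeasurableSet B) (hBpos : 0 < μ B) {δ : ℝ} (hδ : 0 < δ) :
    ∃ A, A ⊆ B ∧ MeasurableSet A ∧ 0 < μ A ∧
      ∃ c : E, ∀ᵐ ω ∂μ.restrict A, ‖f₀ ω - c‖ ≤ δ := by
  set g := hf₀.1.mk f₀ with hgdef
  have hg : StronglyMeasurable g := hf₀.1.stronglyMeasurable_mk
  have hfg : f₀ =ᵐ[μ] g := hf₀.1.ae_eq_mk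
  obtain ⟨s, hs_count, hs_sub⟩ := hg.isSeparable_range
  obtain ⟨ω₀, hω₀⟩ : B.Nonempty := nonempty_of_measure_ne_zero hBpos.ne'
  have hs_ne : s.Nonempty := by
    by_contra h
    rw [Set.not_nonempty_iff_eq_empty] at h
    have := hs_sub (Set.mem_range_self ω₀)
    simp [h] at this
  obtain ⟨u, hu⟩ := Set.Countable.exists_eq_range hs_count hs_ne
  set A : ℕ → Set Ω := fun n => B ∩ {ω | ‖g ω - u n‖ ≤ δ} with hA
  have hAmeas : ∀ n, MeasurableSet (A n) := by
    intro n
    refine hB.inter ?_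
    have hm : Measurable fun ω => ‖g ω - u n‖ :=
      ((hg.sub stronglyMeasurable_const).norm).measurable
    exact hm measurableSet_Iic
  have hcover : B ⊆ ⋃ n, A n := by
    intro ω hω
    have hmem : g ω ∈ closure s := hs_sub (Set.mem_range_self ω)
    obtain ⟨p, hp, hdist⟩ := Metric.mem_closure_iff.1 hmem δ hδ
    rw [hu] at hp
    obtain ⟨n, rfl⟩ := hp
    rw [dist_eq_norm] at hdist
    exact Set.mem_iUnion.2 ⟨n, hω, le_of_lt hdist⟩
  have hexists : ∃ n, μ (A n) ≠ 0 := by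
    by_contra h
    push_neg at h
    have : μ (⋃ n, A n) = 0 := measure_iUnion_null h
    exact absurd (measure_mono_null hcover this) hBpos.ne'
  obtain ⟨n, hn⟩ := hexists
  refine ⟨A n, Set.inter_subset_left, hAmeas n, pos_iff_ne_zero.2 hn, u n, ?_⟩
  filter_upwards [ae_restrict_of_ae hfg, ae_restrict_mem (hAmeas n)] with ω hω hωA
  rw [hω]
  exact hωA.2

end Aux

theorem seqBocce_of_strong_conv {Ω E : Type*} [MeasurableSpace Ω] [NormedAddCommGroup E]
    [NormedSpace ℝ E] [CompleteSpace E] (μ : Measure Ω) [IsProbabilityMeasure μ]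
    (f : ℕ → Ω → E) (f₀ : Ω → E) (hf : ∀ k, Integrable (f k) μ) (hf₀ : Integrable f₀ μ)
    (hconv : Filter.Tendsto (fun k => ∫ ω, ‖f k ω - f₀ ω‖ ∂μ) Filter.atTop (nhds 0)) :
    SeqBocceCriterion μ f := by
  intro k hk ε hε B hB hBpos
  obtain ⟨A, hAB, hAmeas, hApos, c, hc⟩ :=
    exists_small_osc hf₀ hB hBpos (show (0:ℝ) < ε/8 by linarith)
  have hAfin : μ A ≠ ⊤ := measure_ne_top μ A
  set a := (μ A).toReal with ha
  have hapos : 0 < a := ENNReal.toReal_pos hApos.ne' hAfin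
  have h₀small : bocce μ f₀ A ≤ ε/4 := by
    have := bocce_le_of_ae hf₀ hApos hAfin hc
    linarith
  refine ⟨A, hAB, hAmeas, hApos, ?_⟩
  -- eventual bound on the subsequence
  have hT : Tendsto (fun j => ∫ ω, ‖f (k j) ω - f₀ ω‖ ∂μ) atTop (𝓝 0) :=
    hconv.comp hk.tendsto_atTop
  have hbd : ∀ᶠ j in atTop, bocce μ (f (k j)) A ≤ ε/2 := by
    have hev : ∀ᶠ j in atTop, (∫ ω, ‖f (k j) ω - f₀ ω‖ ∂μ) < a * ε / 8 := by
      have hpos : (0:ℝ) < a * ε / 8 := by positivity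
      exact hT.eventually_lt_const hpos
    filter_upwards [hev] with j hj
    have hIle : (∫ ω in A, ‖f (k j) ω - f₀ ω‖ ∂μ) ≤ ∫ ω, ‖f (k j) ω - f₀ ω‖ ∂μ :=
      setIntegral_le_integral ((hf (k j)).sub hf₀).norm
        (Filter.Eventually.of_forall fun ω => norm_nonneg _)
    have hboc := bocce_le_bocce_add (hf (k j)) hf₀ hAmeas hApos hAfin
    have h2 : 2 * (∫ ω in A, ‖f (k j) ω - f₀ ω‖ ∂μ) / a ≤ ε/4 := by
      rw [div_le_iff₀ hapos]
      have : (∫ ω in A, ‖f (k j) ω - f₀ ω‖ ∂μ) < a * ε / 8 := lt_of_le_of_lt hIle hj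
      nlinarith
    calc bocce μ (f (k j)) A ≤ bocce μ f₀ A + 2 * (∫ ω in A, ‖f (k j) ω - f₀ ω‖ ∂μ) / a := hboc
      _ ≤ ε/4 + ε/4 := add_le_add h₀small h2
      _ = ε/2 := by ring
  have hlb : IsBoundedUnder (· ≥ ·) atTop (fun j => bocce μ (f (k j)) A) :=
    ⟨0, Filter.eventually_map.2 (Filter.Eventually.of_forall fun j => bocce_nonneg _ _)⟩
  have : liminf (fun j => bocce μ (f (k j)) A) atTop ≤ ε/2 :=
    liminf_le_of_frequently_le hbd.frequently hlb
  linarith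
end

section
/- A subset K of L¹(μ, E) is relatively norm compact if and only if: (a) for each measurable B with positive measure, {m_B(f) : f ∈ K} is relatively norm compact in E, and (b) for each η > 0 there is a finite measurable partition π of Ω such that ∫_Ω ‖f − E_π(f)‖ dμ < η for every f ∈ K, where E_π(f) is the conditional expectation of f with respect to the finite algebra generated by π. -/
open MeasureTheory Filter Topology

/-- `K` is relatively norm compact in (the prequotient space) `L¹(μ, E)`:
every sequence from `K` has a subsequence converging in the `L¹`-seminorm. -/
def RelNormCompact {Ω E : Type*} [MeasurableSpace Ω] [NormedAddCommGroup E]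
    [NormedSpace ℝ E] (μ : Measure Ω) (K : Set (Ω → E)) : Prop :=
  ∀ f : ℕ → Ω → E, (∀ n, f n ∈ K) →
    ∃ k : ℕ → ℕ, StrictMono k ∧ ∃ f₀ : Ω → E, Integrable f₀ μ ∧
      Filter.Tendsto (fun j => ∫ ω, ‖f (k j) ω - f₀ ω‖ ∂μ) Filter.atTop (nhds 0)

/-- The conditional expectation relative to the finite algebra generated
by a finite measurable partition `π` of `Ω`. -/
noncomputable def condExpPartition {Ω E : Type*} [MeasurableSpace Ω] [NormedAddCommGroup E]
    [NormedSpace ℝ E] (μ : Measure Ω) (π : Finset (Set Ω)) (f : Ω → E) : Ω → E :=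
  fun ω => ∑ A ∈ π, Set.indicator A (fun _ => avg μ f A) ω

section Aux
variable {Ω E : Type*} [MeasurableSpace Ω] [NormedAddCommGroup E] [NormedSpace ℝ E]
  [CompleteSpace E] {μ : Measure Ω} {f g : Ω → E} {A : Set Ω} {π : Finset (Set Ω)}

lemma avg_of_null (h : μ A = 0) : avg μ f A = 0 := by
  have : μ.restrict A = 0 := by rw [Measure.restrict_eq_zero]; exact h
  simp [avg, this]

lemma smul_avg [IsFiniteMeasure μ] : (μ A).toReal • avg μ f A = ∫ ω in A, f ω ∂μ := by
  rcases eq_or_ne (μ A) 0 with h | h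
  · have : μ.restrict A = 0 := by rw [Measure.restrict_eq_zero]; exact h
    simp [avg, this]
  · rw [avg, smul_smul, mul_inv_cancel₀ (ENNReal.toReal_ne_zero.2 ⟨h, measure_ne_top μ A⟩),
      one_smul]

lemma mul_norm_avg_le [IsFiniteMeasure μ] (hf : Integrable f μ) :
    (μ A).toReal * ‖avg μ f A‖ ≤ ∫ ω in A, ‖f ω‖ ∂μ := by
  calc (μ A).toReal * ‖avg μ f A‖ = ‖(μ A).toReal • avg μ f A‖ := by
        rw [norm_smul, Real.norm_eq_abs, abs_of_nonneg ENNReal.toReal_nonneg]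
    _ = ‖∫ ω in A, f ω ∂μ‖ := by rw [smul_avg]
    _ ≤ ∫ ω in A, ‖f ω‖ ∂μ := norm_integral_le_integral_norm _

lemma setIntegral_norm_le_integral_norm (hf : Integrable f μ) :
    ∫ ω in A, ‖f ω‖ ∂μ ≤ ∫ ω, ‖f ω‖ ∂μ :=
  integral_mono_measure Measure.restrict_le_self
    (Eventually.of_forall fun _ => norm_nonneg _) hf.norm

lemma avg_sub (hf : Integrable f μ) (hg : Integrable g μ) :
    avg μ (f - g) A = avg μ f A - avg μ g A := by
  rw [avg, avg, avg, ← smul_sub]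
  congr 1
  exact integral_sub hf.integrableOn hg.integrableOn

lemma norm_avg_sub_avg_le_s8 [IsFiniteMeasure μ] (hf : Integrable f μ) (hg : Integrable g μ) :
    ‖avg μ f A - avg μ g A‖ ≤ (μ A).toReal⁻¹ * ∫ ω, ‖f ω - g ω‖ ∂μ := by
  rw [← avg_sub hf hg, avg, norm_smul, Real.norm_eq_abs,
    abs_of_nonneg (inv_nonneg.2 ENNReal.toReal_nonneg)]
  gcongr
  calc ‖∫ ω in A, (f - g) ω ∂μ‖ ≤ ∫ ω in A, ‖(f - g) ω‖ ∂μ := norm_integral_le_integral_norm _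
    _ ≤ ∫ ω, ‖f ω - g ω‖ ∂μ := setIntegral_norm_le_integral_norm (hf.sub hg)

lemma integrable_condExpPartition [IsFiniteMeasure μ] (hm : ∀ A ∈ π, MeasurableSet A) :
    Integrable (condExpPartition μ π f) μ := by
  apply integrable_finset_sum
  intro A hA
  exact (integrable_const (avg μ f A)).indicator (hm A hA)

lemma condExpPartition_apply_of_mem (hd : ∀ A ∈ π, ∀ A' ∈ π, A ≠ A' → Disjoint A A')
    (hA : A ∈ π) {ω : Ω} (hω : ω ∈ A) : condExpPartition μ π f ω = avg μ f A := by
  rw [condExpPartition, Finset.sum_eq_single_of_mem A hA]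
  · exact Set.indicator_of_mem hω _
  · intro A' hA' hne
    exact Set.indicator_of_notMem (Set.disjoint_left.1 (hd A' hA' A hA hne) · hω) _

lemma integral_norm_condExpPartition_le [IsFiniteMeasure μ]
    (hm : ∀ A ∈ π, MeasurableSet A) (hd : ∀ A ∈ π, ∀ A' ∈ π, A ≠ A' → Disjoint A A')
    (hc : (⋃ A ∈ π, A) = Set.univ) (hf : Integrable f μ) :
    ∫ ω, ‖condExpPartition μ π f ω‖ ∂μ ≤ ∫ ω, ‖f ω‖ ∂μ := by
  have hpd : Set.Pairwise (↑π) (Function.onFun Disjoint (id : Set Ω → Set Ω)) := by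
    intro A hA A' hA' hne
    exact hd A (by simpa using hA) A' (by simpa using hA') hne
  have hint : Integrable (condExpPartition μ π f) μ := integrable_condExpPartition hm
  have key : ∀ u : Ω → E, Integrable u μ →
      ∫ ω, ‖u ω‖ ∂μ = ∑ A ∈ π, ∫ ω in A, ‖u ω‖ ∂μ := by
    intro u hu
    rw [← setIntegral_univ, ← hc]
    exact integral_biUnion_finset π hm hpd fun A hA => hu.norm.integrableOn
  rw [key _ hint, key _ hf]
  apply Finset.sum_le_sum
  intro A hA
  calc ∫ ω in A, ‖condExpPartition μ π f ω‖ ∂μ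
      = ∫ _ in A, ‖avg μ f A‖ ∂μ := by
        apply setIntegral_congr_fun (hm A hA)
        intro ω hω
        simp only [condExpPartition_apply_of_mem hd hA hω]
    _ = (μ A).toReal * ‖avg μ f A‖ := by rw [setIntegral_const, smul_eq_mul]; rfl
    _ ≤ ∫ ω in A, ‖f ω‖ ∂μ := mul_norm_avg_le hf

lemma condExpPartition_sub (hf : Integrable f μ) (hg : Integrable g μ) :
    condExpPartition μ π (f - g) = condExpPartition μ π f - condExpPartition μ π g := by
  funext ω
  simp only [condExpPartition, Pi.sub_apply, ← Finset.sum_sub_distrib]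
  refine Finset.sum_congr rfl fun A hA => ?_
  rw [avg_sub hf hg]
  by_cases hω : ω ∈ A <;> simp [hω]

lemma integral_norm_condExpPartition_sub_le [IsFiniteMeasure μ]
    (hm : ∀ A ∈ π, MeasurableSet A) (hd : ∀ A ∈ π, ∀ A' ∈ π, A ≠ A' → Disjoint A A')
    (hc : (⋃ A ∈ π, A) = Set.univ) (hf : Integrable f μ) (hg : Integrable g μ) :
    ∫ ω, ‖condExpPartition μ π f ω - condExpPartition μ π g ω‖ ∂μ ≤ ∫ ω, ‖f ω - g ω‖ ∂μ := by
  have := integral_norm_condExpPartition_le (f := f - g) hm hd hc (hf.sub hg)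
  rw [condExpPartition_sub hf hg] at this
  simpa using this

lemma ae_eq_condExpPartition [IsFiniteMeasure μ]
    (hm : ∀ A ∈ π, MeasurableSet A) (hd : ∀ A ∈ π, ∀ A' ∈ π, A ≠ A' → Disjoint A A')
    (hc : (⋃ A ∈ π, A) = Set.univ)
    (hconst : ∀ A ∈ π, ∀ ω ∈ A, ∀ ω' ∈ A, g ω = g ω') :
    ∀ᵐ ω ∂μ, g ω = condExpPartition μ π g ω := by
  set N : Set Ω := ⋃ A ∈ π.filter (fun A => μ A = 0), A with hN
  have hNnull : μ N = 0 := by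
    refine le_antisymm ?_ zero_le
    calc μ N ≤ ∑ A ∈ π.filter (fun A => μ A = 0), μ A := measure_biUnion_finset_le _ _
      _ = 0 := Finset.sum_eq_zero fun A hA => (Finset.mem_filter.1 hA).2
  have hae : ∀ᵐ ω ∂μ, ω ∉ N := by
    rw [ae_iff]
    simpa using hNnull
  filter_upwards [hae] with ω hω
  have : ω ∈ ⋃ A ∈ π, A := by rw [hc]; trivial
  obtain ⟨A, hA, hωA⟩ := Set.mem_iUnion₂.1 this
  have hμA : μ A ≠ 0 := by
    intro h0
    exact hω (Set.mem_iUnion₂.2 ⟨A, Finset.mem_filter.2 ⟨hA, h0⟩, hωA⟩)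
  rw [condExpPartition_apply_of_mem hd hA hωA]
  have : ∫ ω' in A, g ω' ∂μ = (μ A).toReal • g ω := by
    rw [setIntegral_congr_fun (hm A hA) (fun ω' hω' => hconst A hA ω' hω' ω hωA),
      setIntegral_const]
    rfl
  rw [avg, this, smul_smul,
    inv_mul_cancel₀ (ENNReal.toReal_ne_zero.2 ⟨hμA, measure_ne_top μ A⟩), one_smul]

lemma integral_norm_sub_condExpPartition_eq_zero [IsFiniteMeasure μ]
    (hm : ∀ A ∈ π, MeasurableSet A) (hd : ∀ A ∈ π, ∀ A' ∈ π, A ≠ A' → Disjoint A A')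
    (hc : (⋃ A ∈ π, A) = Set.univ)
    (hconst : ∀ A ∈ π, ∀ ω ∈ A, ∀ ω' ∈ A, g ω = g ω') :
    ∫ ω, ‖g ω - condExpPartition μ π g ω‖ ∂μ = 0 := by
  have h := ae_eq_condExpPartition (μ := μ) hm hd hc hconst
  rw [integral_congr_ae (g := fun _ => (0:ℝ)) (h.mono fun ω hω => by rw [hω]; simp),
    integral_zero]

lemma d_symm (a b : Ω → E) : ∫ ω, ‖a ω - b ω‖ ∂μ = ∫ ω, ‖b ω - a ω‖ ∂μ := by
  simp_rw [norm_sub_rev]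

lemma d_triangle {a b c : Ω → E} (ha : Integrable a μ) (hb : Integrable b μ)
    (hc : Integrable c μ) :
    ∫ ω, ‖a ω - c ω‖ ∂μ ≤ ∫ ω, ‖a ω - b ω‖ ∂μ + ∫ ω, ‖b ω - c ω‖ ∂μ := by
  have h := integral_add (ha.sub hb).norm (hb.sub hc).norm
  simp only [Pi.sub_apply] at h
  rw [← h]
  refine integral_mono (ha.sub hc).norm ?_ fun ω => ?_
  · have := (ha.sub hb).norm.add (hb.sub hc).norm
    exact this
  · simpa using norm_sub_le_norm_sub_add_norm_sub (a ω) (b ω) (c ω)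

/-- `∫ ‖∑ indicator‖ ≤ ∑ μ(sᵢ) ‖vᵢ‖`. -/
lemma integral_norm_sum_indicator_le [IsFiniteMeasure μ] {ι : Type*} (t : Finset ι)
    (s : ι → Set Ω) (hs : ∀ i ∈ t, MeasurableSet (s i)) (v : ι → E) :
    ∫ ω, ‖∑ i ∈ t, Set.indicator (s i) (fun _ => v i) ω‖ ∂μ ≤
      ∑ i ∈ t, (μ (s i)).toReal * ‖v i‖ := by
  have hint : ∀ i ∈ t, Integrable (Set.indicator (s i) fun _ => v i) μ := fun i hi =>
    (integrable_const (v i)).indicator (hs i hi)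
  have hintn : ∀ i ∈ t, Integrable (Set.indicator (s i) fun _ => ‖v i‖) μ := fun i hi =>
    (integrable_const ‖v i‖).indicator (hs i hi)
  calc ∫ ω, ‖∑ i ∈ t, Set.indicator (s i) (fun _ => v i) ω‖ ∂μ
      ≤ ∫ ω, ∑ i ∈ t, Set.indicator (s i) (fun _ => ‖v i‖) ω ∂μ := by
        refine integral_mono (integrable_finset_sum t hint).norm
          (integrable_finset_sum t hintn) fun ω => ?_
        refine (norm_sum_le _ _).trans (le_of_eq (Finset.sum_congr rfl fun i hi => ?_))
        rw [norm_indicator_eq_indicator_norm]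
    _ = ∑ i ∈ t, ∫ ω, Set.indicator (s i) (fun _ => ‖v i‖) ω ∂μ :=
        integral_finset_sum t hintn
    _ = ∑ i ∈ t, (μ (s i)).toReal * ‖v i‖ := by
        refine Finset.sum_congr rfl fun i hi => ?_
        rw [integral_indicator_const _ (hs i hi), smul_eq_mul]
        rfl

lemma integral_norm_lt_of_eLpNorm_lt {h : Ω → E} (hi : AEStronglyMeasurable h μ) {c : ℝ}
    (hlt : eLpNorm h 1 μ < ENNReal.ofReal c) : ∫ ω, ‖h ω‖ ∂μ < c := by
  rw [integral_norm_eq_lintegral_enorm hi]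
  rw [eLpNorm_one_eq_lintegral_enorm] at hlt
  exact ENNReal.toReal_lt_of_lt_ofReal hlt

lemma dist_toL1 {a b : Ω → E} (ha : Integrable a μ) (hb : Integrable b μ) :
    dist (ha.toL1 a) (hb.toL1 b) = ∫ ω, ‖a ω - b ω‖ ∂μ := by
  have h1 : ∫ ω, ‖a ω - b ω‖ ∂μ = (∫⁻ ω, ‖a ω - b ω‖₊ ∂μ).toReal := by
    have := integral_norm_eq_lintegral_enorm (ha.sub hb).aestronglyMeasurable
    exact this
  rw [dist_edist, Integrable.edist_toL1_toL1, h1]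
  congr 1
  refine lintegral_congr fun ω => ?_
  exact edist_eq_enorm_sub _ _

/-- A finite measurable partition. -/
def IsPart {Ω : Type*} [MeasurableSpace Ω] (π : Finset (Set Ω)) : Prop :=
  (∀ A ∈ π, MeasurableSet A) ∧ (∀ A ∈ π, ∀ A' ∈ π, A ≠ A' → Disjoint A A') ∧
    (⋃ A ∈ π, A) = Set.univ

open Classical in
/-- The partition into fibers of a simple function. -/
noncomputable def fibersPart (s : SimpleFunc Ω E) : Finset (Set Ω) :=
  s.range.image fun c => s ⁻¹' {c}

lemma isPart_fibersPart (s : SimpleFunc Ω E) : IsPart (fibersPart s) := by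
  classical
  refine ⟨?_, ?_, ?_⟩
  · intro A hA
    obtain ⟨c, _, rfl⟩ := Finset.mem_image.1 hA
    exact s.measurableSet_fiber c
  · intro A hA A' hA' hne
    obtain ⟨c, _, rfl⟩ := Finset.mem_image.1 hA
    obtain ⟨c', _, rfl⟩ := Finset.mem_image.1 hA'
    have hcc : c ≠ c' := fun h => hne (by rw [h])
    rw [Set.disjoint_left]
    rintro ω (hω : s ω ∈ ({c} : Set E)) (hω' : s ω ∈ ({c'} : Set E))
    exact hcc ((Set.mem_singleton_iff.1 hω).symm.trans (Set.mem_singleton_iff.1 hω'))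
  · rw [Set.eq_univ_iff_forall]
    intro ω
    exact Set.mem_iUnion₂.2 ⟨s ⁻¹' {s ω}, Finset.mem_image.2 ⟨s ω, s.mem_range_self ω, rfl⟩,
      rfl⟩

lemma fibersPart_const (s : SimpleFunc Ω E) :
    ∀ A ∈ fibersPart s, ∀ ω ∈ A, ∀ ω' ∈ A, s ω = s ω' := by
  classical
  intro A hA ω hω ω' hω'
  obtain ⟨c, _, rfl⟩ := Finset.mem_image.1 hA
  exact (Set.mem_singleton_iff.1 hω).trans (Set.mem_singleton_iff.1 hω').symm

open Classical in
/-- Common refinement of two partitions. -/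
noncomputable def refinePart {Ω : Type*} (π₁ π₂ : Finset (Set Ω)) : Finset (Set Ω) :=
  (π₁ ×ˢ π₂).image fun p => p.1 ∩ p.2

lemma isPart_refinePart {Ω : Type*} [MeasurableSpace Ω] {π₁ π₂ : Finset (Set Ω)}
    (h₁ : IsPart π₁) (h₂ : IsPart π₂) : IsPart (refinePart π₁ π₂) := by
  classical
  obtain ⟨hm₁, hd₁, hc₁⟩ := h₁
  obtain ⟨hm₂, hd₂, hc₂⟩ := h₂
  refine ⟨?_, ?_, ?_⟩
  · intro A hA
    obtain ⟨⟨A₁, A₂⟩, hp, rfl⟩ := Finset.mem_image.1 hA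
    rw [Finset.mem_product] at hp
    exact (hm₁ _ hp.1).inter (hm₂ _ hp.2)
  · intro A hA A' hA' hne
    obtain ⟨⟨A₁, A₂⟩, hp, rfl⟩ := Finset.mem_image.1 hA
    obtain ⟨⟨A₁', A₂'⟩, hp', rfl⟩ := Finset.mem_image.1 hA'
    rw [Finset.mem_product] at hp hp'
    by_cases h1 : A₁ = A₁'
    · by_cases h2 : A₂ = A₂'
      · exact absurd (by rw [h1, h2]) hne
      · exact Set.disjoint_of_subset Set.inter_subset_right Set.inter_subset_right
          (hd₂ _ hp.2 _ hp'.2 h2)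
    · exact Set.disjoint_of_subset Set.inter_subset_left Set.inter_subset_left
        (hd₁ _ hp.1 _ hp'.1 h1)
  · rw [Set.eq_univ_iff_forall]
    intro ω
    have h1 : ω ∈ ⋃ A ∈ π₁, A := by rw [hc₁]; trivial
    have h2 : ω ∈ ⋃ A ∈ π₂, A := by rw [hc₂]; trivial
    obtain ⟨A₁, hA₁, hω₁⟩ := Set.mem_iUnion₂.1 h1
    obtain ⟨A₂, hA₂, hω₂⟩ := Set.mem_iUnion₂.1 h2
    exact Set.mem_iUnion₂.2 ⟨A₁ ∩ A₂,
      Finset.mem_image.2 ⟨(A₁, A₂), Finset.mem_product.2 ⟨hA₁, hA₂⟩, rfl⟩, ⟨hω₁, hω₂⟩⟩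

lemma refinePart_subset_left {Ω : Type*} {π₁ π₂ : Finset (Set Ω)} {B : Set Ω}
    (hB : B ∈ refinePart π₁ π₂) : ∃ A ∈ π₁, B ⊆ A := by
  classical
  obtain ⟨⟨A₁, A₂⟩, hp, rfl⟩ := Finset.mem_image.1 hB
  rw [Finset.mem_product] at hp
  exact ⟨A₁, hp.1, Set.inter_subset_left⟩

lemma refinePart_subset_right {Ω : Type*} {π₁ π₂ : Finset (Set Ω)} {B : Set Ω}
    (hB : B ∈ refinePart π₁ π₂) : ∃ A ∈ π₂, B ⊆ A := by
  classical
  obtain ⟨⟨A₁, A₂⟩, hp, rfl⟩ := Finset.mem_image.1 hB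
  rw [Finset.mem_product] at hp
  exact ⟨A₂, hp.2, Set.inter_subset_right⟩

/-- Constancy on atoms transfers to a refinement. -/
lemma const_of_refine {Ω E' : Type*} {π π' : Finset (Set Ω)} {g : Ω → E'}
    (href : ∀ B ∈ π', ∃ A ∈ π, B ⊆ A)
    (hconst : ∀ A ∈ π, ∀ ω ∈ A, ∀ ω' ∈ A, g ω = g ω') :
    ∀ B ∈ π', ∀ ω ∈ B, ∀ ω' ∈ B, g ω = g ω' := by
  intro B hB ω hω ω' hω'
  obtain ⟨A, hA, hBA⟩ := href B hB
  exact hconst A hA ω (hBA hω) ω' (hBA hω')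

lemma exists_net_of_relNormCompact {K : Set (Ω → E)} (hR : RelNormCompact μ K)
    (hK : ∀ f ∈ K, Integrable f μ) {ε : ℝ} (hε : 0 < ε) :
    ∃ T : Set (Ω → E), T.Finite ∧ T ⊆ K ∧
      ∀ f ∈ K, ∃ g ∈ T, ∫ ω, ‖f ω - g ω‖ ∂μ < ε := by
  by_contra hcon
  push_neg at hcon
  have step : ∀ l : List (Ω → E), (∀ g ∈ l, g ∈ K) →
      ∃ f ∈ K, ∀ g ∈ l, ε ≤ ∫ ω, ‖f ω - g ω‖ ∂μ := by
    intro l hl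
    obtain ⟨f, hfK, hf⟩ := hcon {g | g ∈ l} (List.finite_toSet l) (fun g hg => hl g hg)
    exact ⟨f, hfK, fun g hg => hf g hg⟩
  let next : {l : List (Ω → E) // ∀ g ∈ l, g ∈ K} → {l : List (Ω → E) // ∀ g ∈ l, g ∈ K} :=
    fun x => ⟨(step x.1 x.2).choose :: x.1, by
      rw [List.forall_mem_cons]
      exact ⟨(step x.1 x.2).choose_spec.1, x.2⟩⟩
  let Ls : ℕ → {l : List (Ω → E) // ∀ g ∈ l, g ∈ K} :=
    fun n => next^[n] ⟨[], by simp⟩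
  have hLs : ∀ n, Ls (n + 1) = next (Ls n) := fun n => Function.iterate_succ_apply' _ _ _
  let F : ℕ → Ω → E := fun n => (step (Ls n).1 (Ls n).2).choose
  have hFK : ∀ n, F n ∈ K := fun n => (step (Ls n).1 (Ls n).2).choose_spec.1
  have hmem : ∀ n m, m < n → F m ∈ (Ls n).1 := by
    intro n
    induction n with
    | zero => intro m hm; omega
    | succ n ih =>
      intro m hm
      have : (Ls (n + 1)).1 = F n :: (Ls n).1 := by rw [hLs]
      rw [this]
      rcases Nat.lt_succ_iff_lt_or_eq.1 hm with h | h
      · exact List.mem_cons_of_mem _ (ih m h)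
      · subst h; exact List.mem_cons_self
  have hfar : ∀ n m, m < n → ε ≤ ∫ ω, ‖F n ω - F m ω‖ ∂μ := fun n m hm =>
    (step (Ls n).1 (Ls n).2).choose_spec.2 (F m) (hmem n m hm)
  obtain ⟨k, hk, f₀, hf₀, htend⟩ := hR F hFK
  have hev : ∀ᶠ j in atTop, ∫ ω, ‖F (k j) ω - f₀ ω‖ ∂μ < ε / 2 :=
    htend.eventually (gt_mem_nhds (half_pos hε))
  obtain ⟨J, hJ⟩ := eventually_atTop.1 hev
  have h1 := hJ J le_rfl
  have h2 := hJ (J + 1) (Nat.le_succ J)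
  have hlt : k J < k (J + 1) := hk (Nat.lt_succ_self J)
  have h3 := hfar (k (J + 1)) (k J) hlt
  have h4 := d_triangle (μ := μ) (hK _ (hFK (k (J + 1)))) hf₀ (hK _ (hFK (k J)))
  rw [d_symm (μ := μ) f₀ (F (k J))] at h4
  linarith

lemma relNormCompact_of_net {K : Set (Ω → E)} (hK : ∀ f ∈ K, Integrable f μ)
    (hnet : ∀ ε : ℝ, 0 < ε → ∃ T : Set (Ω → E), T.Finite ∧ (∀ g ∈ T, Integrable g μ) ∧
      ∀ f ∈ K, ∃ g ∈ T, ∫ ω, ‖f ω - g ω‖ ∂μ < ε) :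
    RelNormCompact μ K := by
  classical
  intro f hf
  set L : ℕ → (Lp E 1 μ) := fun n => (hK (f n) (hf n)).toL1 (f n) with hL
  have htb : TotallyBounded (Set.range L) := by
    rw [Metric.totallyBounded_iff]
    intro ε hε
    obtain ⟨T, hTfin, hTint, hTnet⟩ := hnet ε hε
    refine ⟨(fun g : Ω → E => if hg : Integrable g μ then hg.toL1 g else 0) '' T,
      hTfin.image _, ?_⟩
    rintro x ⟨n, rfl⟩
    obtain ⟨g, hgT, hglt⟩ := hTnet (f n) (hf n)
    have hgi : Integrable g μ := hTint g hgT
    refine Set.mem_iUnion₂.2 ⟨hgi.toL1 g, ⟨g, hgT, by simp only [dif_pos hgi]⟩, ?_⟩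
    rw [Metric.mem_ball, dist_toL1 (hK (f n) (hf n)) hgi]
    exact hglt
  have hcompact : IsCompact (closure (Set.range L)) :=
    TotallyBounded.isCompact_of_isClosed htb.closure isClosed_closure
  obtain ⟨F₀, _, k, hk, htend⟩ :=
    hcompact.tendsto_subseq (x := L) fun n => subset_closure (Set.mem_range_self n)
  have hF₀ : Integrable (⇑F₀) μ := L1.integrable_coeFn F₀
  refine ⟨k, hk, ⇑F₀, hF₀, ?_⟩
  have hdist : ∀ j, ∫ ω, ‖f (k j) ω - F₀ ω‖ ∂μ = dist (L (k j)) F₀ := by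
    intro j
    rw [← dist_toL1 (hK (f (k j)) (hf (k j))) hF₀, Integrable.toL1_coeFn]
  simp_rw [hdist]
  rw [← tendsto_iff_dist_tendsto_zero] at *
  exact htend

lemma exists_common_partition [IsFiniteMeasure μ] (l : List (Ω → E))
    (hl : ∀ g ∈ l, Integrable g μ) {δ : ℝ} (hδ : 0 < δ) :
    ∃ π : Finset (Set Ω), IsPart π ∧ ∀ g ∈ l, ∃ h : Ω → E, Integrable h μ ∧
      (∀ A ∈ π, ∀ ω ∈ A, ∀ ω' ∈ A, h ω = h ω') ∧ ∫ ω, ‖g ω - h ω‖ ∂μ < δ := by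
  induction l with
  | nil =>
    refine ⟨{Set.univ}, ⟨?_, ?_, ?_⟩, by simp⟩
    · intro A hA; rw [Finset.mem_singleton] at hA; subst hA; exact MeasurableSet.univ
    · intro A hA A' hA' hne
      rw [Finset.mem_singleton] at hA hA'
      exact absurd (hA.trans hA'.symm) hne
    · simp
  | cons g l ih =>
    obtain ⟨π, hπ, hlist⟩ := ih fun g' hg' => hl g' (List.mem_cons_of_mem _ hg')
    have hgi : Integrable g μ := hl g List.mem_cons_self
    obtain ⟨s, hs, hsmem⟩ := (memLp_one_iff_integrable.2 hgi).exists_simpleFunc_eLpNorm_sub_lt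
      ENNReal.one_ne_top (ENNReal.ofReal_pos.2 hδ).ne'
    have hsint : Integrable (⇑s) μ := memLp_one_iff_integrable.1 hsmem
    refine ⟨refinePart (fibersPart s) π, isPart_refinePart (isPart_fibersPart s) hπ, ?_⟩
    intro g' hg'
    rcases List.mem_cons.1 hg' with h | h
    · subst h
      refine ⟨⇑s, hsint, ?_, ?_⟩
      · exact const_of_refine (fun B hB => refinePart_subset_left hB) (fibersPart_const s)
      · have := integral_norm_lt_of_eLpNorm_lt (h := g' - ⇑s)
          (hgi.sub hsint).aestronglyMeasurable hs
        simpa [Pi.sub_apply] using this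
    · obtain ⟨h', hh'int, hh'const, hh'lt⟩ := hlist g' h
      exact ⟨h', hh'int, const_of_refine (fun B hB => refinePart_subset_right hB) hh'const,
        hh'lt⟩

end Aux

theorem relNormCompact_iff_partition {Ω E : Type*} [MeasurableSpace Ω] [NormedAddCommGroup E]
    [NormedSpace ℝ E] [CompleteSpace E] (μ : Measure Ω) [IsProbabilityMeasure μ]
    (K : Set (Ω → E)) (hK : ∀ f ∈ K, Integrable f μ) :
    RelNormCompact μ K ↔
      ((∀ B : Set Ω, MeasurableSet B → 0 < μ B →
          IsCompact (closure {x : E | ∃ f ∈ K, x = avg μ f B})) ∧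
        ∀ η : ℝ, 0 < η → ∃ π : Finset (Set Ω),
          (∀ A ∈ π, MeasurableSet A) ∧
          (∀ A ∈ π, ∀ A' ∈ π, A ≠ A' → Disjoint A A') ∧
          (⋃ A ∈ π, A) = Set.univ ∧
          ∀ f ∈ K, ∫ ω, ‖f ω - condExpPartition μ π f ω‖ ∂μ < η) := by
  constructor
  · intro hR
    constructor
    · -- (a)
      intro B hB hμB
      have hpos : 0 < (μ B).toReal := ENNReal.toReal_pos hμB.ne' (measure_ne_top μ B)
      refine TotallyBounded.isCompact_of_isClosed (TotallyBounded.closure ?_) isClosed_closure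
      rw [Metric.totallyBounded_iff]
      intro ε hε
      obtain ⟨T, hTfin, hTK, hTnet⟩ := exists_net_of_relNormCompact hR hK
        (mul_pos hε hpos)
      refine ⟨(fun g => avg μ g B) '' T, hTfin.image _, ?_⟩
      rintro x ⟨fx, hfx, rfl⟩
      obtain ⟨g, hgT, hlt⟩ := hTnet fx hfx
      refine Set.mem_iUnion₂.2 ⟨avg μ g B, Set.mem_image_of_mem _ hgT, ?_⟩
      rw [Metric.mem_ball, dist_eq_norm]
      calc ‖avg μ fx B - avg μ g B‖
          ≤ (μ B).toReal⁻¹ * ∫ ω, ‖fx ω - g ω‖ ∂μ :=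
            norm_avg_sub_avg_le_s8 (hK fx hfx) (hK g (hTK hgT))
        _ < (μ B).toReal⁻¹ * (ε * (μ B).toReal) := by
            exact mul_lt_mul_of_pos_left hlt (inv_pos.2 hpos)
        _ = ε := by field_simp
    · -- (b)
      intro η hη
      obtain ⟨T, hTfin, hTK, hTnet⟩ := exists_net_of_relNormCompact hR hK
        (show (0:ℝ) < η/4 by linarith)
      classical
      set l := hTfin.toFinset.toList with hldef
      have hmeml : ∀ g, g ∈ l ↔ g ∈ T := by
        intro g
        rw [hldef, Finset.mem_toList, Set.Finite.mem_toFinset]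
      obtain ⟨π, ⟨hm, hd, hc⟩, happrox⟩ := exists_common_partition (μ := μ) l
        (fun g hg => hK g (hTK ((hmeml g).1 hg)))
        (show (0:ℝ) < η/4 by linarith)
      refine ⟨π, hm, hd, hc, ?_⟩
      intro f hf
      obtain ⟨g, hgT, hfg⟩ := hTnet f hf
      have hgK : g ∈ K := hTK hgT
      obtain ⟨h, hhint, hhconst, hgh⟩ := happrox g ((hmeml g).2 hgT)
      have hfi := hK f hf
      have hgi := hK g hgK
      have hEf : Integrable (condExpPartition μ π f) μ := integrable_condExpPartition hm
      have hEg : Integrable (condExpPartition μ π g) μ := integrable_condExpPartition hm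
      have hEh : Integrable (condExpPartition μ π h) μ := integrable_condExpPartition hm
      have t1 : ∫ ω, ‖f ω - condExpPartition μ π f ω‖ ∂μ ≤
          ∫ ω, ‖f ω - g ω‖ ∂μ + ∫ ω, ‖g ω - condExpPartition μ π f ω‖ ∂μ :=
        d_triangle hfi hgi hEf
      have t2 : ∫ ω, ‖g ω - condExpPartition μ π f ω‖ ∂μ ≤
          ∫ ω, ‖g ω - h ω‖ ∂μ + ∫ ω, ‖h ω - condExpPartition μ π f ω‖ ∂μ :=
        d_triangle hgi hhint hEf
      have t3 : ∫ ω, ‖h ω - condExpPartition μ π f ω‖ ∂μ ≤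
          ∫ ω, ‖h ω - condExpPartition μ π h ω‖ ∂μ +
          ∫ ω, ‖condExpPartition μ π h ω - condExpPartition μ π f ω‖ ∂μ :=
        d_triangle hhint hEh hEf
      have t4 : ∫ ω, ‖h ω - condExpPartition μ π h ω‖ ∂μ = 0 :=
        integral_norm_sub_condExpPartition_eq_zero hm hd hc hhconst
      have t5 : ∫ ω, ‖condExpPartition μ π h ω - condExpPartition μ π f ω‖ ∂μ ≤
          ∫ ω, ‖h ω - f ω‖ ∂μ :=
        integral_norm_condExpPartition_sub_le hm hd hc hhint hfi
      have t6 : ∫ ω, ‖h ω - f ω‖ ∂μ ≤ ∫ ω, ‖h ω - g ω‖ ∂μ + ∫ ω, ‖g ω - f ω‖ ∂μ :=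
        d_triangle hhint hgi hfi
      have s1 : ∫ ω, ‖h ω - g ω‖ ∂μ = ∫ ω, ‖g ω - h ω‖ ∂μ := d_symm _ _
      have s2 : ∫ ω, ‖g ω - f ω‖ ∂μ = ∫ ω, ‖f ω - g ω‖ ∂μ := d_symm _ _
      linarith
  · -- backward
    rintro ⟨ha, hb⟩
    apply relNormCompact_of_net hK
    intro ε hε
    classical
    obtain ⟨π, hm, hd, hc, happ⟩ := hb (ε/2) (half_pos hε)
    set n := π.card with hn
    set δ := ε / (2 * (n+1)) with hδdef
    have hδ : 0 < δ := by rw [hδdef]; positivity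
    have hNex : ∀ A ∈ π, ∃ N : Set E, N.Finite ∧
        ∀ f ∈ K, ∃ x ∈ N, ‖avg μ f A - x‖ < δ := by
      intro A hA
      rcases eq_or_ne (μ A) 0 with h0 | h0
      · exact ⟨{0}, Set.finite_singleton 0, fun f hf =>
          ⟨0, rfl, by rw [avg_of_null h0]; simpa using hδ⟩⟩
      · have hcomp := ha A (hm A hA) (pos_iff_ne_zero.2 h0)
        have htb := hcomp.totallyBounded
        rw [Metric.totallyBounded_iff] at htb
        obtain ⟨N, hNfin, hNcov⟩ := htb δ hδ
        refine ⟨N, hNfin, fun f hf => ?_⟩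
        have hmem : avg μ f A ∈ closure {x : E | ∃ f ∈ K, x = avg μ f A} :=
          subset_closure ⟨f, hf, rfl⟩
        obtain ⟨y, hyN, hy⟩ := Set.mem_iUnion₂.1 (hNcov hmem)
        exact ⟨y, hyN, by rw [← dist_eq_norm]; exact hy⟩
    choose! N hNfin hNprop using hNex
    let Nf : Set Ω → Finset E := fun A => if hA : A ∈ π then (hNfin A hA).toFinset else ∅
    let Φ : (∀ A ∈ π, E) → (Ω → E) :=
      fun x ω => ∑ A ∈ π.attach, Set.indicator A.1 (fun _ => x A.1 A.2) ω
    let T : Finset (Ω → E) := (π.pi fun A => Nf A).image Φ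
    refine ⟨↑T, T.finite_toSet, ?_, ?_⟩
    · intro g hg
      rw [Finset.mem_coe, Finset.mem_image] at hg
      obtain ⟨x, _, rfl⟩ := hg
      exact integrable_finset_sum _ fun A _ =>
        (integrable_const _).indicator (hm A.1 A.2)
    · intro f hf
      have hxex : ∀ A ∈ π, ∃ z ∈ N A, ‖avg μ f A - z‖ < δ := fun A hA => hNprop A hA f hf
      choose! y hy1 hy2 using hxex
      have hxmem : (fun A hA => y A) ∈ π.pi (fun A => Nf A) := by
        rw [Finset.mem_pi]
        intro A hA
        show y A ∈ Nf A
        rw [show Nf A = (hNfin A hA).toFinset from dif_pos hA]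
        exact (hNfin A hA).mem_toFinset.2 (hy1 A hA)
      refine ⟨Φ (fun A hA => y A), Finset.mem_coe.2 (Finset.mem_image_of_mem Φ hxmem), ?_⟩
      have hEf : Integrable (condExpPartition μ π f) μ := integrable_condExpPartition hm
      have hΦ : Integrable (Φ (fun A hA => y A)) μ :=
        integrable_finset_sum _ fun A _ => (integrable_const _).indicator (hm A.1 A.2)
      have heq : ∀ ω, condExpPartition μ π f ω - Φ (fun A hA => y A) ω =
          ∑ A ∈ π.attach, Set.indicator A.1 (fun _ => avg μ f A.1 - y A.1) ω := by
        intro ω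
        rw [condExpPartition,
          ← Finset.sum_attach π (fun A => Set.indicator A (fun _ => avg μ f A) ω),
          show Φ (fun A hA => y A) ω =
            ∑ A ∈ π.attach, Set.indicator A.1 (fun _ => y A.1) ω from rfl,
          ← Finset.sum_sub_distrib]
        refine Finset.sum_congr rfl fun A _ => ?_
        by_cases hω : ω ∈ A.1 <;> simp [hω]
      have hstep1 : ∫ ω, ‖condExpPartition μ π f ω - Φ (fun A hA => y A) ω‖ ∂μ ≤ n * δ := by
        calc ∫ ω, ‖condExpPartition μ π f ω - Φ (fun A hA => y A) ω‖ ∂μ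
            = ∫ ω, ‖∑ A ∈ π.attach, Set.indicator A.1 (fun _ => avg μ f A.1 - y A.1) ω‖ ∂μ := by
              exact integral_congr_ae (Eventually.of_forall fun ω => by simp only [heq ω])
          _ ≤ ∑ A ∈ π.attach, (μ A.1).toReal * ‖avg μ f A.1 - y A.1‖ :=
              integral_norm_sum_indicator_le π.attach (fun A => A.1)
                (fun A _ => hm A.1 A.2) _
          _ ≤ ∑ _A ∈ π.attach, δ := by
              refine Finset.sum_le_sum fun A _ => ?_
              have h1 : (μ A.1).toReal ≤ 1 := by
                rw [show (1:ℝ) = (μ Set.univ).toReal by simp]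
                exact ENNReal.toReal_mono (measure_ne_top μ _) (measure_mono (Set.subset_univ _))
              calc (μ A.1).toReal * ‖avg μ f A.1 - y A.1‖ ≤ 1 * δ :=
                    mul_le_mul h1 (le_of_lt (hy2 A.1 A.2)) (norm_nonneg _) zero_le_one
                _ = δ := one_mul δ
          _ = n * δ := by rw [Finset.sum_const, Finset.card_attach, nsmul_eq_mul, hn]
      have hnδ : (n:ℝ) * δ < ε/2 := by
        have h1 : δ * ((n:ℝ)+1) = ε/2 := by
          rw [hδdef]; field_simp
        have h2 : δ * (n:ℝ) < δ * ((n:ℝ)+1) := by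
          apply mul_lt_mul_of_pos_left _ hδ
          linarith
        linarith [mul_comm (n:ℝ) δ]
      have hfef : ∫ ω, ‖f ω - condExpPartition μ π f ω‖ ∂μ < ε/2 := happ f hf
      have tri : ∫ ω, ‖f ω - Φ (fun A hA => y A) ω‖ ∂μ ≤
          ∫ ω, ‖f ω - condExpPartition μ π f ω‖ ∂μ +
          ∫ ω, ‖condExpPartition μ π f ω - Φ (fun A hA => y A) ω‖ ∂μ :=
        d_triangle (hK f hf) hEf hΦ
      linarith
end

section
/- If a sequence (f_k) in L¹(μ, E) is uniformly integrable and converges to the null function almost everywhere in the weak topology of E (i.e. there is a full-measure set A such that for every x* ∈ E* and ω ∈ A, x*(f_k(ω)) → 0), then for every function g : Ω × E → ℝ with g(ω,0) = 0, g(ω,·) weakly continuous for each ω, |g(ω,x)| ≤ C‖x‖ + φ(ω) for some C > 0 and φ ∈ L¹(μ, ℝ), and ω ↦ g(ω, f(ω)) measurable for each f ∈ L¹(μ, E), one has ∫_Ω g(ω, f_k(ω)) dμ(ω) → 0. -/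
open MeasureTheory Filter Topology

theorem limited_of_ui_ae_weakly_null {Ω E : Type*} [MeasurableSpace Ω]
    [NormedAddCommGroup E] [NormedSpace ℝ E] [CompleteSpace E]
    (μ : Measure Ω) [IsProbabilityMeasure μ]
    (f : ℕ → Ω → E) (hf : ∀ k, Integrable (f k) μ)
    -- uniform integrability
    (hui : ∀ ε : ℝ, 0 < ε → ∃ c : ℝ, ∀ k,
      ∫ ω in {ω | c ≤ ‖f k ω‖}, ‖f k ω‖ ∂μ ≤ ε)
    -- almost everywhere weakly null
    (hae : ∃ A : Set Ω, MeasurableSet A ∧ μ Aᶜ = 0 ∧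
      ∀ x' : StrongDual ℝ E, ∀ ω ∈ A,
        Filter.Tendsto (fun k => x' (f k ω)) Filter.atTop (nhds 0))
    (g : Ω × E → ℝ)
    (hg0 : ∀ ω, g (ω, 0) = 0)
    (hgw : ∀ ω, Continuous fun x : WeakSpace ℝ E => g (ω, x))
    (hgb : ∃ C : ℝ, 0 < C ∧ ∃ φ : Ω → ℝ, Integrable φ μ ∧
      ∀ ω x, |g (ω, x)| ≤ C * ‖x‖ + φ ω)
    (hgm : ∀ h : Ω → E, Integrable h μ → Measurable fun ω => g (ω, h ω)) :
    Filter.Tendsto (fun k => ∫ ω, g (ω, f k ω) ∂μ) Filter.atTop (nhds 0) := by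
  obtain ⟨C, hC, φ, hφint, hbnd⟩ := hgb
  obtain ⟨A, -, hAc, hweak⟩ := hae
  have hφ0 : ∀ ω, 0 ≤ φ ω := fun ω => by
    have := hbnd ω 0
    simpa [hg0 ω] using this
  -- replace f by a measurable modification f'
  set f' : ℕ → Ω → E := fun k => (hf k).1.mk (f k) with hf'def
  have hmeas' : ∀ k, StronglyMeasurable (f' k) := fun k => (hf k).1.stronglyMeasurable_mk
  have heq : ∀ k, f k =ᵐ[μ] f' k := fun k => (hf k).1.ae_eq_mk
  have hf' : ∀ k, Integrable (f' k) μ := fun k => (hf k).congr (heq k)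
  have hgm' : ∀ k, Measurable fun ω => g (ω, f' k ω) := fun k => hgm _ (hf' k)
  have hgint : ∀ k, Integrable (fun ω => g (ω, f' k ω)) μ := by
    intro k
    refine Integrable.mono' (((hf' k).norm.const_mul C).add hφint)
      (hgm' k).aestronglyMeasurable (ae_of_all _ fun ω => ?_)
    simpa [Real.norm_eq_abs] using hbnd ω (f' k ω)
  -- rewrite the goal in terms of f'
  have hkey : (fun k => ∫ ω, g (ω, f k ω) ∂μ) = fun k => ∫ ω, g (ω, f' k ω) ∂μ := by
    funext k
    refine integral_congr_ae ?_
    filter_upwards [heq k] with ω hω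
    rw [hω]
  rw [hkey]
  -- uniform integrability for f'
  have hui' : ∀ ε : ℝ, 0 < ε → ∃ c : ℝ, ∀ k,
      ∫ ω in {ω | c ≤ ‖f' k ω‖}, ‖f' k ω‖ ∂μ ≤ ε := by
    intro ε hε
    obtain ⟨c, hc⟩ := hui ε hε
    refine ⟨c, fun k => ?_⟩
    have hset : {ω | c ≤ ‖f' k ω‖} =ᵐ[μ] {ω | c ≤ ‖f k ω‖} := by
      rw [Filter.eventuallyEq_set]
      filter_upwards [heq k] with ω hω
      simp [hω]
    calc ∫ ω in {ω | c ≤ ‖f' k ω‖}, ‖f' k ω‖ ∂μ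
        = ∫ ω in {ω | c ≤ ‖f k ω‖}, ‖f' k ω‖ ∂μ := setIntegral_congr_set hset
      _ = ∫ ω in {ω | c ≤ ‖f k ω‖}, ‖f k ω‖ ∂μ := by
          refine integral_congr_ae (ae_restrict_of_ae ?_)
          filter_upwards [heq k] with ω hω
          rw [hω]
      _ ≤ ε := hc k
  -- uniform bound on L¹ norms
  obtain ⟨c₀, hc₀⟩ := hui' 1 one_pos
  set M : ℝ := max c₀ 0 + 1 with hMdef
  have hM1 : (1:ℝ) ≤ M := by
    have : (0:ℝ) ≤ max c₀ 0 := le_max_right _ _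
    linarith
  have hM0 : (0:ℝ) < M := lt_of_lt_of_le one_pos hM1
  have hM : ∀ k, ∫ ω, ‖f' k ω‖ ∂μ ≤ M := by
    intro k
    have hs : MeasurableSet {ω | c₀ ≤ ‖f' k ω‖} :=
      measurableSet_le measurable_const (hmeas' k).norm.measurable
    have hsplit := integral_add_compl hs (hf' k).norm
    have h1 : ∫ ω in {ω | c₀ ≤ ‖f' k ω‖}, ‖f' k ω‖ ∂μ ≤ 1 := hc₀ k
    have h2 : ∫ ω in {ω | c₀ ≤ ‖f' k ω‖}ᶜ, ‖f' k ω‖ ∂μ ≤ max c₀ 0 := by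
      calc ∫ ω in {ω | c₀ ≤ ‖f' k ω‖}ᶜ, ‖f' k ω‖ ∂μ
          ≤ ∫ _ω in {ω | c₀ ≤ ‖f' k ω‖}ᶜ, max c₀ 0 ∂μ := by
            refine setIntegral_mono_on (hf' k).norm.integrableOn
              (integrableOn_const (measure_ne_top _ _)) hs.compl ?_
            intro ω hω
            have h' : ¬ c₀ ≤ ‖f' k ω‖ := hω
            exact le_trans (le_of_not_ge h') (le_max_left _ _)
        _ = max c₀ 0 * (μ {ω | c₀ ≤ ‖f' k ω‖}ᶜ).toReal := by
            simp [setIntegral_const, mul_comm, Measure.real]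
        _ ≤ max c₀ 0 * 1 := by
            refine mul_le_mul_of_nonneg_left ?_ (le_max_right _ _)
            have : μ {ω | c₀ ≤ ‖f' k ω‖}ᶜ ≤ 1 := prob_le_one
            simpa using ENNReal.toReal_mono ENNReal.one_ne_top this
        _ = max c₀ 0 := mul_one _
    linarith [hsplit]
  -- main ε argument
  rw [NormedAddCommGroup.tendsto_nhds_zero]
  intro ε hε
  -- absolute continuity of the integral of φ
  have hφtop : ∫⁻ ω, ENNReal.ofReal (φ ω) ∂μ ≠ ⊤ := by
    have := hφint.hasFiniteIntegral
    rw [HasFiniteIntegral] at this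
    refine ne_of_lt (lt_of_le_of_lt (lintegral_mono fun ω => ?_) this)
    rw [← Real.enorm_eq_ofReal (hφ0 ω)]
  obtain ⟨δ, hδ0, hδ⟩ := exists_pos_setLIntegral_lt_of_measure_lt hφtop
    (ε := ENNReal.ofReal (ε/4)) (by simp [ENNReal.ofReal_eq_zero]; linarith)
  have hφs : ∀ s : Set Ω, μ s < δ → ∫ ω in s, φ ω ∂μ ≤ ε/4 := by
    intro s hsδ
    have h1 : ∫ ω in s, φ ω ∂μ = (∫⁻ ω in s, ENNReal.ofReal (φ ω) ∂μ).toReal := by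
      rw [integral_eq_lintegral_of_nonneg_ae (ae_of_all _ fun ω => hφ0 ω)
        hφint.aestronglyMeasurable.restrict]
    rw [h1]
    have := (hδ s hsδ).le
    calc (∫⁻ ω in s, ENNReal.ofReal (φ ω) ∂μ).toReal
        ≤ (ENNReal.ofReal (ε/4)).toReal := ENNReal.toReal_mono ENNReal.ofReal_ne_top this
      _ = ε/4 := ENNReal.toReal_ofReal (by linarith)
  -- choose a real threshold d below δ
  set d : ℝ := (min δ 1).toReal with hddef
  have hmin_pos : 0 < min δ 1 := lt_min hδ0 (by norm_num)
  have hmin_top : min δ 1 ≠ ⊤ := ne_of_lt (lt_of_le_of_lt (min_le_right _ _) (by norm_num))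
  have hd0 : 0 < d := ENNReal.toReal_pos hmin_pos.ne' hmin_top
  -- choose the cut level c
  obtain ⟨c₁, hc₁⟩ := hui' (ε/(4*C)) (by positivity)
  set c : ℝ := max c₁ (max 1 (2*M/d)) with hcdef
  have hc1 : (1:ℝ) ≤ c := le_trans (le_max_left _ _) (le_max_right _ _)
  have hc0 : (0:ℝ) < c := lt_of_lt_of_le one_pos hc1
  -- tail integral bound at level c
  have htail : ∀ k, ∫ ω in {ω | c ≤ ‖f' k ω‖}, ‖f' k ω‖ ∂μ ≤ ε/(4*C) := by
    intro k
    refine le_trans (setIntegral_mono_set (hf' k).norm.integrableOn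
      (ae_of_all _ fun ω => norm_nonneg _) (HasSubset.Subset.eventuallyLE ?_)) (hc₁ k)
    intro ω hω
    simp only [Set.mem_setOf_eq] at hω ⊢
    exact le_trans (le_max_left _ _) hω
  -- Markov: measure of the tail set is small
  have hmarkov : ∀ k, μ {ω | c ≤ ‖f' k ω‖} < δ := by
    intro k
    have hm := mul_meas_ge_le_integral_of_nonneg
      (ae_of_all μ fun ω => norm_nonneg (f' k ω)) (hf' k).norm c
    have hfin : μ {ω | c ≤ ‖f' k ω‖} ≠ ⊤ := measure_ne_top _ _
    have h1 : (μ {ω | c ≤ ‖f' k ω‖}).toReal ≤ M / c := by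
      rw [le_div_iff₀ hc0]
      calc (μ {ω | c ≤ ‖f' k ω‖}).toReal * c
          = c * (μ {ω | c ≤ ‖f' k ω‖}).toReal := mul_comm _ _
        _ ≤ ∫ ω, ‖f' k ω‖ ∂μ := hm
        _ ≤ M := hM k
    have h2 : M / c ≤ d / 2 := by
      have hcge : 2*M/d ≤ c := le_trans (le_max_right _ _) (le_max_right _ _)
      have h2Md : 0 < 2*M/d := by positivity
      calc M / c ≤ M / (2*M/d) := by
            apply div_le_div_of_nonneg_left hM0.le h2Md hcge
        _ = d / 2 := by
            rw [div_div_eq_mul_div]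
            field_simp
    calc μ {ω | c ≤ ‖f' k ω‖}
        = ENNReal.ofReal ((μ {ω | c ≤ ‖f' k ω‖}).toReal) := (ENNReal.ofReal_toReal hfin).symm
      _ ≤ ENNReal.ofReal (d/2) := ENNReal.ofReal_le_ofReal (le_trans h1 h2)
      _ < ENNReal.ofReal d := ENNReal.ofReal_lt_ofReal_iff hd0 |>.2 (by linarith)
      _ = min δ 1 := by rw [hddef, ENNReal.ofReal_toReal hmin_top]
      _ ≤ δ := min_le_left _ _
  -- tail sets
  have hsmeas : ∀ k, MeasurableSet {ω | c ≤ ‖f' k ω‖} := fun k =>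
    measurableSet_le measurable_const (hmeas' k).norm.measurable
  -- a.e. pointwise convergence on a good set
  set A' : Set Ω := A ∩ ⋂ k, {ω | f k ω = f' k ω} with hA'def
  have hA'c : μ A'ᶜ = 0 := by
    rw [hA'def, Set.compl_inter, Set.compl_iInter]
    refine measure_union_null hAc (measure_iUnion_null fun k => ?_)
    have := heq k
    rw [Filter.EventuallyEq, ae_iff] at this
    exact this
  have hA'ae : ∀ᵐ ω ∂μ, ω ∈ A' := by
    rw [ae_iff]
    exact hA'c
  have hptw : ∀ ω ∈ A', Tendsto (fun k => g (ω, f' k ω)) atTop (𝓝 0) := by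
    intro ω hω
    have hωA : ω ∈ A := hω.1
    have hωeq : ∀ k, f k ω = f' k ω := fun k => by
      have := hω.2
      exact Set.mem_iInter.1 this k
    have hinj : Function.Injective ((topDualPairing ℝ E).flip) := by
      intro x y hxy
      exact (NormedSpace.eq_iff_forall_dual_eq ℝ).2 fun l => congrArg (fun t => t l) hxy
    have hweak' : Tendsto (fun k => toWeakSpace ℝ E (f' k ω)) atTop
        (𝓝 (toWeakSpace ℝ E 0)) := by
      apply (WeakBilin.tendsto_iff_forall_eval_tendsto ((topDualPairing ℝ E).flip) hinj).2
      intro y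
      have := hweak y ω hωA
      simp only [← hωeq]
      rw [← map_zero y] at this
      exact this
    have := ((hgw ω).tendsto (toWeakSpace ℝ E 0)).comp hweak'
    have h0 : g (ω, (toWeakSpace ℝ E 0 : WeakSpace ℝ E)) = 0 := hg0 ω
    rw [h0] at this
    exact this
  -- dominated convergence for the truncated parts
  have hdct : Tendsto (fun k => ∫ ω, Set.indicator {ω | c ≤ ‖f' k ω‖}ᶜ
      (fun ω => g (ω, f' k ω)) ω ∂μ) atTop (𝓝 0) := by
    have h := tendsto_integral_of_dominated_convergence (bound := fun ω => C * c + φ ω)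
      (F := fun k ω => Set.indicator {ω | c ≤ ‖f' k ω‖}ᶜ (fun ω => g (ω, f' k ω)) ω)
      (f := fun _ => (0:ℝ)) (μ := μ)
      (fun k => ((hgm' k).indicator (hsmeas k).compl).aestronglyMeasurable)
      ((integrable_const _).add hφint)
      (fun k => ae_of_all _ fun ω => ?_) ?_
    · simpa using h
    · 
      by_cases hωs : ω ∈ {ω | c ≤ ‖f' k ω‖}ᶜ
      · rw [Set.indicator_of_mem hωs]
        have hlt : ‖f' k ω‖ ≤ c := by
          have h' : ¬ c ≤ ‖f' k ω‖ := hωs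
          exact le_of_not_ge h'
        calc ‖g (ω, f' k ω)‖ = |g (ω, f' k ω)| := Real.norm_eq_abs _
          _ ≤ C * ‖f' k ω‖ + φ ω := hbnd ω _
          _ ≤ C * c + φ ω := by
              have := mul_le_mul_of_nonneg_left hlt hC.le
              linarith
      · rw [Set.indicator_of_notMem hωs]
        have : (0:ℝ) ≤ C * c + φ ω := add_nonneg (mul_nonneg hC.le hc0.le) (hφ0 ω)
        simpa using this
    · filter_upwards [hA'ae] with ω hω
      have hnorm0 : Tendsto (fun k => ‖g (ω, f' k ω)‖) atTop (𝓝 0) := by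
        simpa using (hptw ω hω).norm
      exact squeeze_zero_norm
        (fun k => norm_indicator_le_norm_self (fun ω => g (ω, f' k ω)) ω) hnorm0
  have hev : ∀ᶠ k in atTop, |∫ ω, Set.indicator {ω | c ≤ ‖f' k ω‖}ᶜ
      (fun ω => g (ω, f' k ω)) ω ∂μ| < ε/2 := by
    have := hdct.eventually (eventually_abs_sub_lt 0 (by linarith : (0:ℝ) < ε/2))
    simpa using this
  filter_upwards [hev] with k hk
  have hsplit : ∫ ω, g (ω, f' k ω) ∂μ =
      (∫ ω in {ω | c ≤ ‖f' k ω‖}, g (ω, f' k ω) ∂μ) +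
      ∫ ω, Set.indicator {ω | c ≤ ‖f' k ω‖}ᶜ (fun ω => g (ω, f' k ω)) ω ∂μ := by
    rw [integral_indicator (hsmeas k).compl]
    exact (integral_add_compl (hsmeas k) (hgint k)).symm
  have hpart1 : |∫ ω in {ω | c ≤ ‖f' k ω‖}, g (ω, f' k ω) ∂μ| ≤ ε/2 := by
    have h1 : |∫ ω in {ω | c ≤ ‖f' k ω‖}, g (ω, f' k ω) ∂μ|
        ≤ ∫ ω in {ω | c ≤ ‖f' k ω‖}, |g (ω, f' k ω)| ∂μ := by
      simpa [Real.norm_eq_abs] using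
        norm_integral_le_integral_norm (μ := μ.restrict {ω | c ≤ ‖f' k ω‖})
          (fun ω => g (ω, f' k ω))
    have h2 : ∫ ω in {ω | c ≤ ‖f' k ω‖}, |g (ω, f' k ω)| ∂μ
        ≤ ∫ ω in {ω | c ≤ ‖f' k ω‖}, (C * ‖f' k ω‖ + φ ω) ∂μ := by
      refine integral_mono (hgint k).abs.integrableOn
        (((hf' k).norm.const_mul C).add hφint).integrableOn ?_
      intro ω
      exact hbnd ω (f' k ω)
    have h3 : ∫ ω in {ω | c ≤ ‖f' k ω‖}, (C * ‖f' k ω‖ + φ ω) ∂μ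
        = C * (∫ ω in {ω | c ≤ ‖f' k ω‖}, ‖f' k ω‖ ∂μ)
          + ∫ ω in {ω | c ≤ ‖f' k ω‖}, φ ω ∂μ := by
      rw [integral_add (((hf' k).norm.const_mul C)).integrableOn hφint.integrableOn,
        integral_const_mul]
    have h4 : C * (∫ ω in {ω | c ≤ ‖f' k ω‖}, ‖f' k ω‖ ∂μ) ≤ ε/4 := by
      have := htail k
      calc C * (∫ ω in {ω | c ≤ ‖f' k ω‖}, ‖f' k ω‖ ∂μ)
          ≤ C * (ε/(4*C)) := mul_le_mul_of_nonneg_left this hC.le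
        _ = ε/4 := by field_simp
    have h5 : ∫ ω in {ω | c ≤ ‖f' k ω‖}, φ ω ∂μ ≤ ε/4 := hφs _ (hmarkov k)
    linarith
  rw [Real.norm_eq_abs, hsplit]
  calc |(∫ ω in {ω | c ≤ ‖f' k ω‖}, g (ω, f' k ω) ∂μ) +
      ∫ ω, Set.indicator {ω | c ≤ ‖f' k ω‖}ᶜ (fun ω => g (ω, f' k ω)) ω ∂μ|
      ≤ |∫ ω in {ω | c ≤ ‖f' k ω‖}, g (ω, f' k ω) ∂μ| +
        |∫ ω, Set.indicator {ω | c ≤ ‖f' k ω‖}ᶜ (fun ω => g (ω, f' k ω)) ω ∂μ| := abs_add_le _ _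
    _ < ε/2 + ε/2 := by
        have := hpart1
        linarith
    _ = ε := by ring
end

section
/- Let (f_k) be a uniformly integrable sequence in L¹(μ, E) and g : Ω × E → ℝ satisfy |g(ω,x)| ≤ C‖x‖ + φ(ω) with C > 0 and φ ∈ L¹. If for every N ∈ ℕ the truncated sequence f_k^N := f_k · 1_{[‖f_k‖ ≤ N]} satisfies ∫ g(ω, f_k^N(ω)) dμ → 0 as k → ∞, then ∫ g(ω, f_k(ω)) dμ → 0. -/
open MeasureTheory Filter Topology

theorem limited_of_truncated_limited {Ω E : Type*} [MeasurableSpace Ω]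
    [NormedAddCommGroup E] [NormedSpace ℝ E] [CompleteSpace E]
    (μ : Measure Ω) [IsProbabilityMeasure μ]
    (f : ℕ → Ω → E) (hf : ∀ k, Integrable (f k) μ)
    -- uniform integrability
    (hui : ∀ ε : ℝ, 0 < ε → ∃ c : ℝ, ∀ k,
      ∫ ω in {ω | c ≤ ‖f k ω‖}, ‖f k ω‖ ∂μ ≤ ε)
    (g : Ω × E → ℝ)
    (hg0 : ∀ ω, g (ω, 0) = 0)
    (hgb : ∃ C : ℝ, 0 < C ∧ ∃ φ : Ω → ℝ, Integrable φ μ ∧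
      ∀ ω x, |g (ω, x)| ≤ C * ‖x‖ + φ ω)
    (hgm : ∀ h : Ω → E, Integrable h μ → Measurable fun ω => g (ω, h ω))
    -- each truncated sequence converges limitedly (against `g`) to 0
    (htrunc : ∀ N : ℕ, Filter.Tendsto
      (fun k => ∫ ω, g (ω, Set.indicator {ω | ‖f k ω‖ ≤ (N : ℝ)} (f k) ω) ∂μ)
      Filter.atTop (nhds 0)) :
    Filter.Tendsto (fun k => ∫ ω, g (ω, f k ω) ∂μ) Filter.atTop (nhds 0) := by
  obtain ⟨C, hC, φ, hφ, hb⟩ := hgb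
  have hφ0 : ∀ ω, 0 ≤ φ ω := fun ω => by
    have h := hb ω 0
    simpa [hg0 ω] using h
  -- integrability of the compositions with g
  have hG : ∀ h : Ω → E, Integrable h μ → Integrable (fun ω => g (ω, h ω)) μ := fun h hh =>
    Integrable.mono' ((hh.norm.const_mul C).add hφ) (hgm h hh).aestronglyMeasurable
      (Filter.Eventually.of_forall fun ω => by simpa [Real.norm_eq_abs] using hb ω (h ω))
  -- measurable versions
  set f' : ℕ → Ω → E := fun k => (hf k).1.mk (f k) with hf'def
  have hf'sm : ∀ k, StronglyMeasurable (f' k) := fun k => (hf k).1.stronglyMeasurable_mk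
  have hff' : ∀ k, f k =ᵐ[μ] f' k := fun k => (hf k).1.ae_eq_mk
  have hf'int : ∀ k, Integrable (f' k) μ := fun k => (hf k).congr (hff' k)
  -- truncations are integrable
  have htrunc_eq : ∀ k (N : ℕ), Set.indicator {ω | ‖f k ω‖ ≤ (N : ℝ)} (f k)
      =ᵐ[μ] Set.indicator {ω | ‖f' k ω‖ ≤ (N : ℝ)} (f' k) := by
    intro k N
    filter_upwards [hff' k] with ω hω
    simp [Set.indicator_apply, hω]
  have htrInt : ∀ k (N : ℕ), Integrable (Set.indicator {ω | ‖f k ω‖ ≤ (N : ℝ)} (f k)) μ := by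
    intro k N
    have hmeas : MeasurableSet {ω | ‖f' k ω‖ ≤ (N : ℝ)} :=
      measurableSet_le (hf'sm k).norm.measurable measurable_const
    exact Integrable.congr ((hf'int k).indicator hmeas) (htrunc_eq k N).symm
  -- set integrals over sets defined by f equal those defined by f'
  have hsetInt : ∀ (k : ℕ) (c : ℝ),
      ∫ ω in {ω | c ≤ ‖f' k ω‖}, ‖f' k ω‖ ∂μ = ∫ ω in {ω | c ≤ ‖f k ω‖}, ‖f k ω‖ ∂μ := by
    intro k c
    have hset : {ω | c ≤ ‖f' k ω‖} =ᵐ[μ] {ω | c ≤ ‖f k ω‖} := by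
      filter_upwards [hff' k] with ω hω
      have : (c ≤ ‖f' k ω‖) ↔ (c ≤ ‖f k ω‖) := by rw [hω]
      exact eq_iff_iff.2 this
    rw [Measure.restrict_congr_set hset]
    exact integral_congr_ae (Filter.EventuallyEq.symm (ae_restrict_of_ae
      ((hff' k).fun_comp norm)))
  -- uniform bound on the L¹ norms
  obtain ⟨c₁, hc₁⟩ := hui 1 one_pos
  set M : ℝ := max c₁ 0 + 1 with hM
  have hMpos : 0 < M := by positivity
  have hfM : ∀ k, ∫ ω, ‖f' k ω‖ ∂μ ≤ M := by
    intro k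
    have hs : MeasurableSet {ω | c₁ ≤ ‖f' k ω‖} :=
      measurableSet_le measurable_const (hf'sm k).norm.measurable
    have hsplit := integral_add_compl hs (hf'int k).norm
    have h1 : ∫ ω in {ω | c₁ ≤ ‖f' k ω‖}, ‖f' k ω‖ ∂μ ≤ 1 := by
      rw [hsetInt k c₁]; exact hc₁ k
    have h2 : ∫ ω in {ω | c₁ ≤ ‖f' k ω‖}ᶜ, ‖f' k ω‖ ∂μ ≤ max c₁ 0 := by
      calc ∫ ω in {ω | c₁ ≤ ‖f' k ω‖}ᶜ, ‖f' k ω‖ ∂μ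
          ≤ ∫ _ω in {ω | c₁ ≤ ‖f' k ω‖}ᶜ, max c₁ 0 ∂μ := by
            refine setIntegral_mono_on ((hf'int k).norm.integrableOn)
              (integrableOn_const (measure_ne_top _ _)) hs.compl ?_
            intro ω hω
            have : ¬ c₁ ≤ ‖f' k ω‖ := hω
            exact le_trans (le_of_lt (not_le.1 this)) (le_max_left _ _)
        _ = (μ {ω | c₁ ≤ ‖f' k ω‖}ᶜ).toReal * max c₁ 0 := by
            rw [setIntegral_const]; rfl
        _ ≤ 1 * max c₁ 0 := by
            apply mul_le_mul_of_nonneg_right _ (le_max_right _ _)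
            have := prob_le_one (μ := μ) (s := {ω | c₁ ≤ ‖f' k ω‖}ᶜ)
            exact ENNReal.toReal_le_of_le_ofReal one_pos.le (by simpa using this)
        _ = max c₁ 0 := one_mul _
    linarith [hsplit]
  -- the main ε argument
  rw [NormedAddCommGroup.tendsto_nhds_zero]
  intro ε hε
  obtain ⟨c, hc⟩ := hui (ε / 3 / C) (by positivity)
  obtain ⟨δ, hδpos, hδ⟩ := (memLp_one_iff_integrable.2 hφ).eLpNorm_indicator_le le_rfl
    ENNReal.one_ne_top (show (0:ℝ) < ε / 3 by positivity)
  obtain ⟨N, hN⟩ := exists_nat_gt (max c (M / δ))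
  have hcN : c ≤ (N : ℝ) := le_of_lt (lt_of_le_of_lt (le_max_left _ _) hN)
  have hMδN : M / δ < (N : ℝ) := lt_of_le_of_lt (le_max_right _ _) hN
  have hNpos : (0 : ℝ) < N := lt_of_le_of_lt (div_nonneg hMpos.le hδpos.le) hMδN
  -- key uniform estimate
  have key : ∀ k, ‖(∫ ω, g (ω, f k ω) ∂μ) -
      ∫ ω, g (ω, Set.indicator {ω | ‖f k ω‖ ≤ (N : ℝ)} (f k) ω) ∂μ‖ ≤ ε / 3 + ε / 3 := by
    intro k
    set s : Set Ω := {ω | (N : ℝ) < ‖f' k ω‖} with hsdef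
    have hs : MeasurableSet s := measurableSet_lt measurable_const (hf'sm k).norm.measurable
    -- Chebyshev
    have hμs : μ s ≤ ENNReal.ofReal δ := by
      have h1 : (μ s).toReal * (N : ℝ) ≤ ∫ ω in s, ‖f' k ω‖ ∂μ := by
        have := setIntegral_mono_on (integrableOn_const (measure_ne_top _ _))
          ((hf'int k).norm.integrableOn) hs (fun ω hω => le_of_lt (hω : (N : ℝ) < ‖f' k ω‖))
        simpa [setIntegral_const, smul_eq_mul, Measure.real] using this
      have h2 : ∫ ω in s, ‖f' k ω‖ ∂μ ≤ ∫ ω, ‖f' k ω‖ ∂μ :=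
        setIntegral_le_integral (hf'int k).norm
          (Filter.Eventually.of_forall fun ω => norm_nonneg _)
      have h3 : (μ s).toReal ≤ M / N := by
        rw [le_div_iff₀ hNpos]
        exact le_trans h1 (le_trans h2 (hfM k))
      have h4 : (μ s).toReal ≤ δ := by
        have h5 : M < (N : ℝ) * δ := (div_lt_iff₀ hδpos).1 hMδN
        have h6 : M / (N : ℝ) < δ := (div_lt_iff₀ hNpos).2 (by linarith)
        exact le_trans h3 h6.le
      calc μ s = ENNReal.ofReal (μ s).toReal := (ENNReal.ofReal_toReal (measure_ne_top μ s)).symm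
        _ ≤ ENNReal.ofReal δ := ENNReal.ofReal_le_ofReal h4
    -- the difference is an indicator
    have hdiff : (fun ω => g (ω, f k ω) -
        g (ω, Set.indicator {ω | ‖f k ω‖ ≤ (N : ℝ)} (f k) ω))
        =ᵐ[μ] s.indicator (fun ω => g (ω, f k ω)) := by
      filter_upwards [hff' k] with ω hω
      by_cases h : ‖f k ω‖ ≤ (N : ℝ)
      · have h1 : ω ∉ s := by simp [hsdef, ← hω]; exact h
        have h2 : ω ∈ {ω | ‖f k ω‖ ≤ (N : ℝ)} := h
        simp [Set.indicator_of_notMem h1, Set.indicator_of_mem h2]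
      · have h1 : ω ∈ s := by simp [hsdef, ← hω]; exact not_le.1 h
        have h2 : ω ∉ {ω | ‖f k ω‖ ≤ (N : ℝ)} := h
        simp [Set.indicator_of_mem h1, Set.indicator_of_notMem h2, hg0 ω]
    have hint1 := hG (f k) (hf k)
    have hint2 := hG _ (htrInt k N)
    rw [← integral_sub hint1 hint2, integral_congr_ae hdiff]
    calc ‖∫ ω, s.indicator (fun ω => g (ω, f k ω)) ω ∂μ‖
        ≤ ∫ ω, ‖s.indicator (fun ω => g (ω, f k ω)) ω‖ ∂μ := norm_integral_le_integral_norm _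
      _ ≤ ∫ ω, s.indicator (fun ω => C * ‖f' k ω‖ + φ ω) ω ∂μ := by
          refine integral_mono_ae (hint1.indicator hs).norm
            ((((hf'int k).norm.const_mul C).add hφ).indicator hs) ?_
          filter_upwards [hff' k] with ω hω
          by_cases h : ω ∈ s
          · simp only [Set.indicator_of_mem h]
            calc ‖g (ω, f k ω)‖ ≤ C * ‖f k ω‖ + φ ω := by
                  simpa [Real.norm_eq_abs] using hb ω (f k ω)
              _ = C * ‖f' k ω‖ + φ ω := by rw [hω]
          · simp [Set.indicator_of_notMem h]
      _ = ∫ ω in s, (C * ‖f' k ω‖ + φ ω) ∂μ := integral_indicator hs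
      _ = C * ∫ ω in s, ‖f' k ω‖ ∂μ + ∫ ω in s, φ ω ∂μ := by
          rw [integral_add (((hf'int k).norm.const_mul C).integrableOn) hφ.integrableOn,
            integral_const_mul]
      _ ≤ ε / 3 + ε / 3 := by
          gcongr
          -- the C-term
          · have hsub : s ⊆ {ω | c ≤ ‖f' k ω‖} := fun ω hω =>
              le_trans hcN (le_of_lt (hω : (N : ℝ) < ‖f' k ω‖))
            have h1 : ∫ ω in s, ‖f' k ω‖ ∂μ ≤ ∫ ω in {ω | c ≤ ‖f' k ω‖}, ‖f' k ω‖ ∂μ :=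
              setIntegral_mono_set ((hf'int k).norm.integrableOn)
                (Filter.Eventually.of_forall fun ω => norm_nonneg _)
                (HasSubset.Subset.eventuallyLE hsub)
            have h2 : ∫ ω in {ω | c ≤ ‖f' k ω‖}, ‖f' k ω‖ ∂μ ≤ ε / 3 / C := by
              rw [hsetInt k c]; exact hc k
            calc C * ∫ ω in s, ‖f' k ω‖ ∂μ ≤ C * (ε / 3 / C) := by
                  exact mul_le_mul_of_nonneg_left (le_trans h1 h2) hC.le
              _ = ε / 3 := by field_simp
          -- the φ-term
          · have hbound := hδ s hs hμs
            have h1 : ∫ ω in s, φ ω ∂μ ≤ ∫ ω, ‖s.indicator φ ω‖ ∂μ := by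
              rw [← integral_indicator hs]
              exact integral_mono (hφ.indicator hs) (hφ.indicator hs).norm
                (fun ω => le_abs_self _)
            have h2 : ∫ ω, ‖s.indicator φ ω‖ ∂μ = (eLpNorm (s.indicator φ) 1 μ).toReal := by
              rw [integral_norm_eq_lintegral_enorm (hφ.indicator hs).aestronglyMeasurable,
                eLpNorm_one_eq_lintegral_enorm]
            have h3 : (eLpNorm (s.indicator φ) 1 μ).toReal ≤ ε / 3 :=
              ENNReal.toReal_le_of_le_ofReal (by positivity) hbound
            linarith
  -- conclude
  have htr := htrunc N
  rw [NormedAddCommGroup.tendsto_nhds_zero] at htr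
  filter_upwards [htr (ε / 3) (by positivity)] with k hk
  have := key k
  calc ‖∫ ω, g (ω, f k ω) ∂μ‖
      ≤ ‖∫ ω, g (ω, Set.indicator {ω | ‖f k ω‖ ≤ (N : ℝ)} (f k) ω) ∂μ‖ +
        ‖(∫ ω, g (ω, f k ω) ∂μ) -
          ∫ ω, g (ω, Set.indicator {ω | ‖f k ω‖ ≤ (N : ℝ)} (f k) ω) ∂μ‖ := by
        have := norm_add_le (∫ ω, g (ω, Set.indicator {ω | ‖f k ω‖ ≤ (N : ℝ)} (f k) ω) ∂μ)
          ((∫ ω, g (ω, f k ω) ∂μ) -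
            ∫ ω, g (ω, Set.indicator {ω | ‖f k ω‖ ≤ (N : ℝ)} (f k) ω) ∂μ)
        simpa using this
    _ < ε / 3 + (ε / 3 + ε / 3) := by
        apply add_lt_add_of_lt_of_le hk this
    _ = ε := by ring
end

section
/- Let E be a Banach space with separable dual E*. If a uniformly bounded sequence (f_k) in L¹(μ, E) converges scalarly in measure to 0 (i.e. x*(f_k) → 0 in measure for each x* ∈ E*), then some subsequence (f_{k_p}) is almost everywhere weakly null: there is a full-measure set A such that x*(f_{k_p}(ω)) → 0 for every x* ∈ E* and every ω ∈ A. -/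
open MeasureTheory Filter Topology

/-- A general diagonal-extraction lemma: if for each `n` any subsequence can be refined to
satisfy `Q n`, and `Q n` is stable under composition with maps tending to `atTop` and under
eventual equality, then one subsequence satisfies all `Q n` simultaneously. -/
lemma diagonal_subseq {Q : ℕ → (ℕ → ℕ) → Prop}
    (hstep : ∀ n (φ : ℕ → ℕ), StrictMono φ → ∃ ψ : ℕ → ℕ, StrictMono ψ ∧ Q n (φ ∘ ψ))
    (hcomp : ∀ n (φ u : ℕ → ℕ), Q n φ → Filter.Tendsto u Filter.atTop Filter.atTop →
      Q n (φ ∘ u))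
    (hcongr : ∀ n (φ φ' : ℕ → ℕ), φ =ᶠ[Filter.atTop] φ' → Q n φ → Q n φ') :
    ∃ k : ℕ → ℕ, StrictMono k ∧ ∀ n, Q n k := by
  classical
  -- choice function for one refinement step
  have hch : ∀ n (φ : ℕ → ℕ), StrictMono φ →
      ∃ ψ : ℕ → ℕ, StrictMono ψ ∧ Q n (φ ∘ ψ) := hstep
  let e : ℕ → (ℕ → ℕ) → (ℕ → ℕ) := fun n φ =>
    if h : StrictMono φ then (hch n φ h).choose else id
  -- iterated subsequences
  let Φ : ℕ → (ℕ → ℕ) := fun n => Nat.rec (e 0 id)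
    (fun m prev => prev ∘ e (m + 1) prev) n
  have hΦ0 : Φ 0 = e 0 id := rfl
  have hΦsucc : ∀ n, Φ (n + 1) = Φ n ∘ e (n + 1) (Φ n) := fun n => rfl
  have key : ∀ n, StrictMono (Φ n) ∧ ∀ m ≤ n, Q m (Φ n) := by
    intro n
    induction n with
    | zero =>
      have hid : StrictMono (id : ℕ → ℕ) := strictMono_id
      have h0 := hch 0 id hid
      have he : e 0 id = h0.choose := dif_pos hid
      constructor
      · rw [hΦ0, he]
        exact h0.choose_spec.1
      · intro m hm
        interval_cases m
        rw [hΦ0, he]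
        have := h0.choose_spec.2
        rwa [Function.id_comp] at this
    | succ n ih =>
      obtain ⟨hsm, hq⟩ := ih
      have h1 := hch (n + 1) (Φ n) hsm
      have he : e (n + 1) (Φ n) = h1.choose := dif_pos hsm
      have hsm' : StrictMono (Φ (n + 1)) := by
        rw [hΦsucc, he]; exact hsm.comp h1.choose_spec.1
      refine ⟨hsm', fun m hm => ?_⟩
      rcases Nat.lt_or_ge m (n + 1) with h | h
      · have : Q m (Φ n) := hq m (Nat.lt_succ_iff.mp h)
        rw [hΦsucc, he]
        exact hcomp m (Φ n) _ this h1.choose_spec.1.tendsto_atTop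
      · have hm' : m = n + 1 := le_antisymm hm h
        subst hm'
        rw [hΦsucc, he]
        exact h1.choose_spec.2
  -- diagonal sequence
  set k : ℕ → ℕ := fun p => Φ p p with hk
  have hdiag : ∀ n p, n ≤ p → ∃ j, p ≤ j ∧ Φ p p = Φ n j := by
    intro n
    have main : ∀ p, n ≤ p → ∀ q, ∃ j, q ≤ j ∧ Φ p q = Φ n j := by
      intro p hp
      induction p, hp using Nat.le_induction with
      | base => exact fun q => ⟨q, le_rfl, rfl⟩
      | succ p hp ih =>
        intro q
        have hsm := (key p).1
        have h1 := hch (p + 1) (Φ p) hsm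
        have he : e (p + 1) (Φ p) = h1.choose := dif_pos hsm
        have hq : Φ (p + 1) q = Φ p (h1.choose q) := by
          rw [hΦsucc, he]; rfl
        obtain ⟨j, hj1, hj2⟩ := ih (h1.choose q)
        exact ⟨j, le_trans (h1.choose_spec.1.le_apply) hj1, by rw [hq, hj2]⟩
    exact fun p hp => main p hp p
  have hkmono : StrictMono k := by
    refine strictMono_nat_of_lt_succ fun p => ?_
    have hsm := (key p).1
    have h1 := hch (p + 1) (Φ p) hsm
    have he : e (p + 1) (Φ p) = h1.choose := dif_pos hsm
    have : k (p + 1) = Φ p (h1.choose (p + 1)) := by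
      simp only [hk, hΦsucc, he]; rfl
    rw [this]
    calc Φ p p < Φ p (p + 1) := hsm (Nat.lt_succ_self p)
      _ ≤ Φ p (h1.choose (p + 1)) := hsm.monotone (h1.choose_spec.1.le_apply)
  refine ⟨k, hkmono, fun n => ?_⟩
  -- k eventually equals Φ n ∘ u for u tending to atTop
  let u : ℕ → ℕ := fun p => if h : n ≤ p then (hdiag n p h).choose else p
  have hu_ge : ∀ p, p ≤ u p := by
    intro p
    by_cases h : n ≤ p
    · simp only [u, dif_pos h]; exact (hdiag n p h).choose_spec.1
    · simp [u, dif_neg h]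
  have hu : Filter.Tendsto u Filter.atTop Filter.atTop :=
    tendsto_atTop_mono hu_ge tendsto_id
  have heq : (Φ n ∘ u) =ᶠ[Filter.atTop] k := by
    filter_upwards [Filter.eventually_ge_atTop n] with p hp
    simp only [Function.comp_apply, u, dif_pos hp, hk]
    exact ((hdiag n p hp).choose_spec.2).symm
  exact hcongr n (Φ n ∘ u) k heq (hcomp n (Φ n) u ((key n).2 n le_rfl) hu)

theorem exists_subseq_ae_weakly_null {Ω E : Type*} [MeasurableSpace Ω]
    [NormedAddCommGroup E] [NormedSpace ℝ E] [CompleteSpace E]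
    [TopologicalSpace.SeparableSpace (StrongDual ℝ E)]
    (μ : Measure Ω) [IsProbabilityMeasure μ]
    (f : ℕ → Ω → E) (hf : ∀ k, Integrable (f k) μ)
    -- uniform boundedness
    (hbdd : ∃ M : ℝ, ∀ k, ∀ᵐ ω ∂μ, ‖f k ω‖ ≤ M)
    -- scalar convergence in measure to 0
    (hmeas : ∀ x' : StrongDual ℝ E, ∀ δ : ℝ, 0 < δ →
      Filter.Tendsto (fun k => μ {ω | δ ≤ |x' (f k ω)|}) Filter.atTop (nhds 0)) :
    ∃ k : ℕ → ℕ, StrictMono k ∧ ∃ A : Set Ω, MeasurableSet A ∧ μ Aᶜ = 0 ∧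
      ∀ x' : StrongDual ℝ E, ∀ ω ∈ A,
        Filter.Tendsto (fun p => x' (f (k p) ω)) Filter.atTop (nhds 0) := by
  classical
  obtain ⟨M, hM⟩ := hbdd
  set M' : ℝ := max M 0 with hM'
  have hM'0 : 0 ≤ M' := le_max_right _ _
  have hbdd' : ∀ᵐ ω ∂μ, ∀ j, ‖f j ω‖ ≤ M' := by
    rw [MeasureTheory.ae_all_iff]
    intro j
    filter_upwards [hM j] with ω h using h.trans (le_max_left _ _)
  -- dense sequence in the dual
  obtain ⟨D, hD⟩ := TopologicalSpace.exists_dense_seq (StrongDual ℝ E)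
  -- convergence in measure of each scalarized sequence
  have htim : ∀ (n : ℕ) (φ : ℕ → ℕ), StrictMono φ →
      TendstoInMeasure μ (fun p ω => (D n) (f (φ p) ω)) Filter.atTop (0 : Ω → ℝ) := by
    intro n φ hφ
    rw [tendstoInMeasure_iff_dist]
    intro ε hε
    have : (fun p => μ {ω | ε ≤ dist ((D n) (f (φ p) ω)) ((0 : Ω → ℝ) ω)})
        = (fun j => μ {ω | ε ≤ |(D n) (f j ω)|}) ∘ φ := by
      funext p
      simp [Real.dist_eq]
    rw [this]
    exact (hmeas (D n) ε hε).comp hφ.tendsto_atTop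
  -- diagonal extraction
  set Q : ℕ → (ℕ → ℕ) → Prop := fun n φ =>
    ∀ᵐ ω ∂μ, Filter.Tendsto (fun p => (D n) (f (φ p) ω)) Filter.atTop (nhds 0) with hQ
  have hstep : ∀ n (φ : ℕ → ℕ), StrictMono φ → ∃ ψ : ℕ → ℕ, StrictMono ψ ∧ Q n (φ ∘ ψ) := by
    intro n φ hφ
    obtain ⟨ns, hns, hae⟩ := (htim n φ hφ).exists_seq_tendsto_ae
    exact ⟨ns, hns, by filter_upwards [hae] with ω h using h⟩
  have hcomp : ∀ n (φ u : ℕ → ℕ), Q n φ →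
      Filter.Tendsto u Filter.atTop Filter.atTop → Q n (φ ∘ u) := by
    intro n φ u h hu
    filter_upwards [h] with ω hω using hω.comp hu
  have hcongr : ∀ n (φ φ' : ℕ → ℕ), φ =ᶠ[Filter.atTop] φ' → Q n φ → Q n φ' := by
    intro n φ φ' hφφ' h
    filter_upwards [h] with ω hω
    refine hω.congr' ?_
    filter_upwards [hφφ'] with p hp
    rw [hp]
  obtain ⟨k, hk, hQk⟩ := diagonal_subseq hstep hcomp hcongr
  -- the good full-measure set
  have hgood : ∀ᵐ ω ∂μ, (∀ n, Filter.Tendsto (fun p => (D n) (f (k p) ω))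
      Filter.atTop (nhds 0)) ∧ ∀ j, ‖f j ω‖ ≤ M' := by
    refine ((MeasureTheory.ae_all_iff).2 hQk).and hbdd'
  set S : Set Ω := {ω | (∀ n, Filter.Tendsto (fun p => (D n) (f (k p) ω))
      Filter.atTop (nhds 0)) ∧ ∀ j, ‖f j ω‖ ≤ M'} with hS
  have hSc : μ Sᶜ = 0 := hgood
  refine ⟨k, hk, (toMeasurable μ Sᶜ)ᶜ, (measurableSet_toMeasurable μ Sᶜ).compl, ?_, ?_⟩
  · rw [compl_compl, measure_toMeasurable]; exact hSc
  · intro x' ω hω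
    have hωS : ω ∈ S := by
      by_contra h
      exact hω (subset_toMeasurable μ Sᶜ h)
    obtain ⟨htend, hnorm⟩ := hωS
    rw [NormedAddCommGroup.tendsto_nhds_zero]
    intro ε hε
    -- choose a close functional from the dense sequence
    have hεM : 0 < ε / (2 * (M' + 1)) := by positivity
    obtain ⟨n, hn⟩ := Metric.denseRange_iff.mp hD x' (ε / (2 * (M' + 1))) hεM
    have h2 : ∀ᶠ p in Filter.atTop, |(D n) (f (k p) ω)| < ε / 2 := by
      have := (NormedAddCommGroup.tendsto_nhds_zero.mp (htend n)) (ε / 2) (by positivity)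
      simpa using this
    filter_upwards [h2] with p hp
    have key : ‖x' (f (k p) ω)‖ ≤ ‖x' - D n‖ * ‖f (k p) ω‖ + |(D n) (f (k p) ω)| := by
      have : x' (f (k p) ω) = (x' - D n) (f (k p) ω) + (D n) (f (k p) ω) := by
        simp
      rw [this]
      refine (norm_add_le _ _).trans ?_
      gcongr
      exact (x' - D n).le_opNorm _
      rw [Real.norm_eq_abs]
    have hdist : ‖x' - D n‖ < ε / (2 * (M' + 1)) := by
      rw [← dist_eq_norm]
      exact hn
    have hbound : ‖x' - D n‖ * ‖f (k p) ω‖ ≤ ε / (2 * (M' + 1)) * M' := by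
      have h1 : ‖f (k p) ω‖ ≤ M' := hnorm (k p)
      have h0 : (0:ℝ) ≤ ‖x' - D n‖ := norm_nonneg _
      calc ‖x' - D n‖ * ‖f (k p) ω‖ ≤ ‖x' - D n‖ * M' := by gcongr
        _ ≤ ε / (2 * (M' + 1)) * M' := by gcongr
    have hfin : ε / (2 * (M' + 1)) * M' < ε / 2 := by
      rw [div_mul_eq_mul_div, div_lt_div_iff₀ (by positivity) (by norm_num)]
      ring_nf
      nlinarith [hε, hM'0]
    calc ‖x' (f (k p) ω)‖ ≤ ‖x' - D n‖ * ‖f (k p) ω‖ + |(D n) (f (k p) ω)| := key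
      _ < ε / 2 + ε / 2 := by
          have := hbound.trans_lt hfin
          linarith
      _ = ε := by ring
end

section
/- Let E = ℓ² and (e_k) its standard unit vector basis, and let μ be Lebesgue measure on [0,1]. The sequence f_k(ω) := 2^k · 1_{[0, 2^{-k})}(ω) · e_k converges scalarly strongly to 0 (i.e. ∫ |y*(f_k)| dμ → 0 for every y* ∈ ℓ²), but does not converge to 0 in L¹(μ, ℓ²) norm. -/
open MeasureTheory Filter Topology ENNReal

/-- The standard unit vectors of `ℓ²`. -/
noncomputable def e2 (k : ℕ) : lp (fun _ : ℕ => ℝ) 2 := lp.single 2 k 1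

/-- `f_k = 2^k ⬝ 1_{[0,2^{-k})} ⬝ e_k`. -/
noncomputable def fex12 (k : ℕ) : ℝ → lp (fun _ : ℕ => ℝ) 2 :=
  Set.indicator (Set.Ico (0 : ℝ) ((2 : ℝ)⁻¹ ^ k)) (fun _ => (2 : ℝ) ^ k • e2 k)

lemma key_integral (k : ℕ) (c : ℝ) :
    ∫ ω in Set.Icc (0 : ℝ) 1,
      Set.indicator (Set.Ico (0 : ℝ) ((2 : ℝ)⁻¹ ^ k)) (fun _ => c) ω = c * (2 : ℝ)⁻¹ ^ k := by
  have hle : ((2 : ℝ)⁻¹ ^ k) ≤ 1 := pow_le_one₀ (by norm_num) (by norm_num)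
  have hpos : (0 : ℝ) < (2 : ℝ)⁻¹ ^ k := by positivity
  rw [MeasureTheory.integral_indicator measurableSet_Ico,
    Measure.restrict_restrict measurableSet_Ico]
  have hst : Set.Ico (0 : ℝ) ((2 : ℝ)⁻¹ ^ k) ∩ Set.Icc (0 : ℝ) 1
      = Set.Ico (0 : ℝ) ((2 : ℝ)⁻¹ ^ k) := by
    refine Set.inter_eq_left.2 fun x hx => ⟨hx.1, le_trans hx.2.le hle⟩
  rw [hst, setIntegral_const, Real.volume_real_Ico_of_le hpos.le, smul_eq_mul,
    mul_comm, sub_zero]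

lemma norm_e2 (k : ℕ) : ‖e2 k‖ = 1 := by
  have h := lp.norm_single (p := 2) (E := fun _ : ℕ => ℝ) (by norm_num) k ((fun _ : ℕ => (1:ℝ)) k)
  rw [e2]
  rw [show ((1 : ℝ)) = (fun _ : ℕ => (1:ℝ)) k from rfl] at *
  rw [h]
  simp

theorem scalarly_strong_not_strong :
    (∀ y' : StrongDual ℝ (lp (fun _ : ℕ => ℝ) 2),
      Filter.Tendsto
        (fun k => ∫ ω in Set.Icc (0 : ℝ) 1, |y' (fex12 k ω)|) Filter.atTop (nhds 0)) ∧
    ¬ Filter.Tendsto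
        (fun k => ∫ ω in Set.Icc (0 : ℝ) 1, ‖fex12 k ω‖) Filter.atTop (nhds 0) := by
  constructor
  · intro y'
    set v := (InnerProductSpace.toDual ℝ (lp (fun _ : ℕ => ℝ) 2)).symm y' with hv
    have hy : ∀ x, y' x = inner ℝ v x := by
      intro x
      rw [hv]
      simp [InnerProductSpace.toDual_symm_apply]
    have hval : ∀ k ω, |y' (fex12 k ω)| =
        Set.indicator (Set.Ico (0 : ℝ) ((2 : ℝ)⁻¹ ^ k)) (fun _ => |y' ((2:ℝ)^k • e2 k)|) ω := by
      intro k ω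
      unfold fex12
      by_cases h : ω ∈ Set.Ico (0 : ℝ) ((2 : ℝ)⁻¹ ^ k)
      · rw [Set.indicator_of_mem h, Set.indicator_of_mem h]
      · rw [Set.indicator_of_notMem h, Set.indicator_of_notMem h, map_zero, abs_zero]
    have heq : ∀ k, (∫ ω in Set.Icc (0 : ℝ) 1, |y' (fex12 k ω)|) = |(v : ∀ _ : ℕ, ℝ) k| := by
      intro k
      simp_rw [hval]
      rw [key_integral]
      have h1 : (inner ℝ v (e2 k) : ℝ) = (v : ∀ _ : ℕ, ℝ) k := by
        rw [e2, lp.inner_single_right]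
        simp [RCLike.inner_apply]
      have h2 : y' ((2:ℝ)^k • e2 k) = (2:ℝ)^k * (v : ∀ _ : ℕ, ℝ) k := by
        rw [hy, inner_smul_right, h1]
      rw [h2, abs_mul, abs_pow, abs_of_pos (two_pos : (0:ℝ) < 2),
        mul_right_comm, ← mul_pow]
      norm_num
    simp_rw [heq]
    have hsum : Summable (fun k => ‖(v : ∀ _ : ℕ, ℝ) k‖ ^ (2 : ENNReal).toReal) :=
      (lp.memℓp v).summable (by norm_num)
    have h0 : Filter.Tendsto (fun k => ‖(v : ∀ _ : ℕ, ℝ) k‖ ^ (2 : ENNReal).toReal)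
        Filter.atTop (nhds 0) := hsum.tendsto_atTop_zero
    have h1 : Filter.Tendsto (fun k => Real.sqrt (‖(v : ∀ _ : ℕ, ℝ) k‖ ^ (2 : ENNReal).toReal))
        Filter.atTop (nhds (Real.sqrt 0)) := (Real.continuous_sqrt.continuousAt).tendsto.comp h0
    simp only [Real.sqrt_zero] at h1
    convert h1 using 2 with k
    rw [show ((2 : ENNReal).toReal) = (2:ℕ) by norm_num, Real.rpow_natCast]
    rw [Real.sqrt_sq_eq_abs, abs_norm, Real.norm_eq_abs]
  · intro h
    have heq : ∀ k : ℕ, (∫ ω in Set.Icc (0 : ℝ) 1, ‖fex12 k ω‖) = 1 := by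
      intro k
      have hval : ∀ ω, ‖fex12 k ω‖ =
          Set.indicator (Set.Ico (0 : ℝ) ((2 : ℝ)⁻¹ ^ k)) (fun _ => (2:ℝ)^k) ω := by
        intro ω
        unfold fex12
        by_cases hm : ω ∈ Set.Ico (0 : ℝ) ((2 : ℝ)⁻¹ ^ k)
        · rw [Set.indicator_of_mem hm, Set.indicator_of_mem hm, norm_smul, norm_e2, mul_one,
            Real.norm_eq_abs, abs_pow, abs_of_pos (two_pos : (0:ℝ) < 2)]
        · rw [Set.indicator_of_notMem hm, Set.indicator_of_notMem hm, norm_zero]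
      simp_rw [hval]
      rw [key_integral, ← mul_pow]
      norm_num
    simp_rw [heq] at h
    exact one_ne_zero (tendsto_nhds_unique tendsto_const_nhds h)
end

section
/- Let E be a separable Banach space and (f_k) a sequence in L¹(μ, E) converging in measure to f₀. Then (f_k) is tight: for each ε > 0 there exists a measurable multifunction F_ε from Ω to the compact subsets of E such that μ({ω : f_k(ω) ∉ F_ε(ω)}) ≤ ε for all k. -/
open MeasureTheory Filter Topology

theorem tight_of_conv_in_measure {Ω E : Type*} [MeasurableSpace Ω]
    [NormedAddCommGroup E] [NormedSpace ℝ E] [CompleteSpace E]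
    [TopologicalSpace.SeparableSpace E] [MeasurableSpace E] [BorelSpace E]
    (μ : Measure Ω) [IsProbabilityMeasure μ]
    (f : ℕ → Ω → E) (f₀ : Ω → E) (hf : ∀ k, Integrable (f k) μ) (hf₀ : Integrable f₀ μ)
    -- convergence in measure
    (hmeas : ∀ δ : ℝ, 0 < δ →
      Filter.Tendsto (fun k => μ {ω | δ ≤ ‖f k ω - f₀ ω‖}) Filter.atTop (nhds 0)) :
    ∀ ε : ℝ, 0 < ε → ∃ F : Ω → Set E,
      (∀ ω, IsCompact (F ω)) ∧
      MeasurableSet {p : Ω × E | p.2 ∈ F p.1} ∧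
      ∀ k, μ {ω | f k ω ∉ F ω} ≤ ENNReal.ofReal ε := by
  intro ε hε
  haveI : SecondCountableTopology E := UniformSpace.secondCountable_of_separable E
  -- measurable modifications of f and f₀
  obtain ⟨h, hmk, haek⟩ : ∃ h : ℕ → Ω → E, (∀ k, StronglyMeasurable (h k)) ∧
      ∀ k, f k =ᵐ[μ] h k :=
    ⟨fun k => (hf k).1.mk (f k), fun k => (hf k).1.stronglyMeasurable_mk,
      fun k => (hf k).1.ae_eq_mk⟩
  obtain ⟨h₀, hmk₀, haek₀⟩ : ∃ h₀ : Ω → E, StronglyMeasurable h₀ ∧ f₀ =ᵐ[μ] h₀ :=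
    ⟨hf₀.1.mk f₀, hf₀.1.stronglyMeasurable_mk, hf₀.1.ae_eq_mk⟩
  -- choose thresholds
  have hN : ∀ n : ℕ, ∃ N : ℕ, ∀ k, N ≤ k →
      μ {ω | 1 / ((n : ℝ) + 1) ≤ ‖f k ω - f₀ ω‖} ≤ ENNReal.ofReal ε := by
    intro n
    have hpos : (0 : ENNReal) < ENNReal.ofReal ε := ENNReal.ofReal_pos.2 hε
    have := (hmeas (1 / ((n : ℝ) + 1)) (by positivity)).eventually_lt_const hpos
    rcases eventually_atTop.1 this with ⟨N, hNk⟩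
    exact ⟨N, fun k hk => (hNk k hk).le⟩
  choose N hNspec using hN
  set M : ℕ → ℕ := fun n => (Finset.range (n + 1)).sup N with hM
  have hNM : ∀ n, N n ≤ M n := fun n =>
    Finset.le_sup (Finset.mem_range.2 (Nat.lt_succ_self n))
  -- the "level" of k
  set nk : ℕ → ℕ := fun k => Nat.findGreatest (fun n => M n ≤ k) k with hnk
  have hnk_spec : ∀ k, M 0 ≤ k → M (nk k) ≤ k := fun k hk =>
    Nat.findGreatest_spec (P := fun n => M n ≤ k) (Nat.zero_le k) hk
  have hnk_tendsto : Tendsto nk atTop atTop := by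
    refine tendsto_atTop_atTop.2 fun b => ⟨max (M b) b, fun k hk => ?_⟩
    exact Nat.le_findGreatest (le_trans (le_max_right _ _) hk)
      (le_trans (le_max_left _ _) hk)
  -- the modified sequence
  set g : ℕ → Ω → E := fun k ω =>
    if M 0 ≤ k ∧ ‖h k ω - h₀ ω‖ < 1 / ((nk k : ℝ) + 1) then h k ω else h₀ ω with hg
  have hgm : ∀ k, StronglyMeasurable (g k) := by
    intro k
    refine StronglyMeasurable.ite ?_ (hmk k) hmk₀
    refine MeasurableSet.inter (MeasurableSet.const _) ?_
    exact StronglyMeasurable.measurableSet_lt (((hmk k).sub hmk₀).norm) stronglyMeasurable_const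
  have hr0 : Tendsto (fun k => 1 / ((nk k : ℝ) + 1)) atTop (𝓝 0) := by
    simp only [one_div]
    refine Tendsto.inv_tendsto_atTop ?_
    exact tendsto_atTop_add_const_right _ 1
      (tendsto_natCast_atTop_atTop.comp hnk_tendsto)
  have hgconv : ∀ ω, Tendsto (fun k => g k ω) atTop (𝓝 (h₀ ω)) := by
    intro ω
    rw [tendsto_iff_dist_tendsto_zero]
    refine squeeze_zero (fun k => dist_nonneg) (fun k => ?_) hr0
    show dist (g k ω) (h₀ ω) ≤ 1 / ((nk k : ℝ) + 1)
    simp only [hg]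
    split_ifs with hcond
    · rw [dist_eq_norm]
      exact hcond.2.le
    · simp only [dist_self]
      positivity
  -- the multifunction
  refine ⟨fun ω => (insert (h₀ ω) (Set.range fun k => g k ω)) ∪
    ⋃ j ∈ Finset.range (M 0), {h j ω}, fun ω => ?_, ?_, fun k => ?_⟩
  · -- compactness
    refine IsCompact.union (hgconv ω).isCompact_insert_range ?_
    exact (Set.Finite.biUnion (Finset.finite_toSet _)
      (fun _ _ => Set.finite_singleton _)).isCompact
  · -- measurability of the graph
    have : {p : Ω × E | p.2 ∈ (insert (h₀ p.1) (Set.range fun k => g k p.1)) ∪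
        ⋃ j ∈ Finset.range (M 0), {h j p.1}} =
        ({p : Ω × E | p.2 = h₀ p.1} ∪ ⋃ k, {p : Ω × E | p.2 = g k p.1}) ∪
        ⋃ j ∈ Finset.range (M 0), {p : Ω × E | p.2 = h j p.1} := by
      ext p
      simp [Set.mem_insert_iff, eq_comm, and_comm]
    rw [this]
    have hsnd : StronglyMeasurable fun p : Ω × E => p.2 :=
      measurable_snd.stronglyMeasurable
    refine MeasurableSet.union (MeasurableSet.union ?_ ?_) ?_
    · exact StronglyMeasurable.measurableSet_eq_fun hsnd
        (hmk₀.comp_measurable measurable_fst)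
    · exact MeasurableSet.iUnion fun k => StronglyMeasurable.measurableSet_eq_fun hsnd
        ((hgm k).comp_measurable measurable_fst)
    · exact MeasurableSet.biUnion (Set.to_countable _) fun j _ =>
        StronglyMeasurable.measurableSet_eq_fun hsnd
        ((hmk j).comp_measurable measurable_fst)
  · -- the measure bound
    have hnull_k : μ {ω | f k ω ≠ h k ω} = 0 := ae_iff.1 (haek k)
    have hnull_0 : μ {ω | f₀ ω ≠ h₀ ω} = 0 := ae_iff.1 haek₀
    by_cases hk : M 0 ≤ k
    · -- large k: use the threshold bound
      have hsub : {ω | f k ω ∉ (insert (h₀ ω) (Set.range fun j => g j ω)) ∪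
          ⋃ j ∈ Finset.range (M 0), {h j ω}} ⊆
          {ω | 1 / ((nk k : ℝ) + 1) ≤ ‖f k ω - f₀ ω‖} ∪
          ({ω | f k ω ≠ h k ω} ∪ {ω | f₀ ω ≠ h₀ ω}) := by
        intro ω hω
        by_cases h1 : f k ω = h k ω
        · by_cases h2 : f₀ ω = h₀ ω
          · left
            by_contra hlt
            simp only [Set.mem_setOf_eq, not_le] at hlt
            have hcond : M 0 ≤ k ∧ ‖h k ω - h₀ ω‖ < 1 / ((nk k : ℝ) + 1) :=
              ⟨hk, by rw [← h1, ← h2]; exact hlt⟩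
            have hgk : g k ω = h k ω := if_pos hcond
            refine hω (Or.inl (Set.mem_insert_iff.2 (Or.inr ⟨k, ?_⟩)))
            show g k ω = f k ω
            rw [hgk, h1]
          · exact Or.inr (Or.inr h2)
        · exact Or.inr (Or.inl h1)
      calc μ _ ≤ μ ({ω | 1 / ((nk k : ℝ) + 1) ≤ ‖f k ω - f₀ ω‖} ∪
            ({ω | f k ω ≠ h k ω} ∪ {ω | f₀ ω ≠ h₀ ω})) := measure_mono hsub
        _ ≤ μ {ω | 1 / ((nk k : ℝ) + 1) ≤ ‖f k ω - f₀ ω‖} +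
            μ ({ω | f k ω ≠ h k ω} ∪ {ω | f₀ ω ≠ h₀ ω}) := measure_union_le _ _
        _ = μ {ω | 1 / ((nk k : ℝ) + 1) ≤ ‖f k ω - f₀ ω‖} := by
            rw [measure_union_null hnull_k hnull_0, add_zero]
        _ ≤ ENNReal.ofReal ε :=
            hNspec (nk k) k (le_trans (hNM (nk k)) (hnk_spec k hk))
    · -- small k: h k ω is always in the set
      have hsub : {ω | f k ω ∉ (insert (h₀ ω) (Set.range fun j => g j ω)) ∪
          ⋃ j ∈ Finset.range (M 0), {h j ω}} ⊆ {ω | f k ω ≠ h k ω} := by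
        intro ω hω
        intro h1
        refine hω (Or.inr ?_)
        refine Set.mem_biUnion (Finset.mem_range.2 (not_le.1 hk)) ?_
        exact h1
      exact le_trans (le_of_eq (measure_mono_null hsub hnull_k)) (zero_le)
end

section
/- Let E be a separable Banach space and L a uniformly integrable, tight subset of L¹(μ, E). Then for every measurable set B with μ(B) > 0, the set Δ_B := {m_B(f) : f ∈ L} of averages is relatively norm compact in E. -/
open MeasureTheory Filter Topology

open Metric TopologicalSpace Set in
theorem averages_relatively_compact_of_ui_tight {Ω E : Type*} [MeasurableSpace Ω]
    [NormedAddCommGroup E] [NormedSpace ℝ E] [CompleteSpace E]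
    [TopologicalSpace.SeparableSpace E] [MeasurableSpace E] [BorelSpace E]
    (μ : Measure Ω) [IsProbabilityMeasure μ]
    (L : Set (Ω → E)) (hL : ∀ f ∈ L, Integrable f μ)
    -- uniform integrability
    (hui : ∀ ε : ℝ, 0 < ε → ∃ c : ℝ, ∀ f ∈ L,
      ∫ ω in {ω | c ≤ ‖f ω‖}, ‖f ω‖ ∂μ ≤ ε)
    -- tightness
    (htight : ∀ ε : ℝ, 0 < ε → ∃ F : Ω → Set E,
      (∀ ω, IsCompact (F ω)) ∧
      MeasurableSet {p : Ω × E | p.2 ∈ F p.1} ∧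
      ∀ f ∈ L, μ {ω | f ω ∉ F ω} ≤ ENNReal.ofReal ε) :
    ∀ B : Set Ω, MeasurableSet B → 0 < μ B →
      IsCompact (closure {x : E | ∃ f ∈ L, x = avg μ f B}) := by
  classical
  intro B hB hBpos
  haveI : Nonempty E := ⟨0⟩
  set b := (μ B).toReal with hbdef
  have hb : 0 < b := ENNReal.toReal_pos hBpos.ne' (measure_ne_top μ B)
  have hTB : TotallyBounded {x : E | ∃ f ∈ L, x = avg μ f B} := by
    rw [Metric.totallyBounded_iff]
    intro ε hε
    -- parameters
    set η := ε * b / 8 with hηdef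
    have hη : 0 < η := by positivity
    set r := ε * b / 16 with hrdef
    have hr : 0 < r := by positivity
    -- uniform integrability constant
    obtain ⟨c₀, hc₀⟩ := hui η hη
    set c := max c₀ 1 with hcdef
    have hc1 : (1:ℝ) ≤ c := le_max_right _ _
    have hcpos : (0:ℝ) < c := lt_of_lt_of_le one_pos hc1
    have hcui : ∀ f ∈ L, ∫ ω in {ω | c ≤ ‖f ω‖}, ‖f ω‖ ∂μ ≤ η := by
      intro f hf
      refine le_trans (setIntegral_mono_set ((hL f hf).norm.integrableOn)
        (ae_restrict_of_ae (ae_of_all _ fun ω => norm_nonneg _))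
        (ae_of_all _ fun ω (hω : c ≤ ‖f ω‖) => le_trans (le_max_left c₀ 1) hω)) (hc₀ f hf)
    -- tightness multifunction
    obtain ⟨F, hFcomp, hFgraph, hFtight⟩ := htight (η / c) (by positivity)
    -- dense sequence and the open sets U n
    set x : ℕ → E := denseSeq E with hxdef
    set U : ℕ → Set E := fun n => ⋃ j ∈ Finset.range (n + 1), ball (x j) r with hUdef
    have hUopen : ∀ n, IsOpen (U n) := fun n => isOpen_biUnion fun j _ => isOpen_ball
    have hUmono : Monotone U := fun m n hmn =>
      Set.biUnion_subset_biUnion_left (Finset.range_subset_range.2 (by omega))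
    have hUcover : ∀ K : Set E, IsCompact K → ∃ n, K ⊆ U n := by
      intro K hK
      have hcov : K ⊆ ⋃ j : ℕ, ball (x j) r := by
        intro y _
        obtain ⟨j, hj⟩ := (denseRange_denseSeq E).exists_dist_lt y hr
        exact Set.mem_iUnion.2 ⟨j, Metric.mem_ball.2 hj⟩
      obtain ⟨s, hs⟩ := hK.elim_finite_subcover (fun j => ball (x j) r)
        (fun j => isOpen_ball) hcov
      refine ⟨s.sup id, hs.trans ?_⟩
      intro y hy
      rcases Set.mem_iUnion₂.1 hy with ⟨j, hjs, hj⟩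
      exact Set.mem_biUnion
        (Finset.mem_range.2 (Nat.lt_succ_of_le (Finset.le_sup (f := id) hjs))) hj
    -- key uniformity claim
    have key : ∃ n₀ : ℕ, ∀ g : Ω → E, Measurable g → (∀ ω, g ω ∈ insert (0:E) (F ω)) →
        μ {ω | g ω ∉ U n₀} ≤ ENNReal.ofReal (η / c) := by
      by_contra hcon
      push_neg at hcon
      choose g hgmeas hgmem hgbad using hcon
      set A : ℕ → Set Ω := fun m => ⋂ k, (g k) ⁻¹' (U m) with hAdef
      have hAmeas : ∀ m, MeasurableSet (A m) := fun m =>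
        MeasurableSet.iInter fun k => (hgmeas k) ((hUopen m).measurableSet)
      have hAmono : Monotone A := fun m n h =>
        Set.iInter_mono fun k => Set.preimage_mono (hUmono h)
      have hAunion : ⋃ m, A m = Set.univ := by
        refine Set.eq_univ_iff_forall.2 fun ω => Set.mem_iUnion.2 ?_
        obtain ⟨m, hm⟩ := hUcover (insert 0 (F ω)) ((hFcomp ω).insert 0)
        exact ⟨m, Set.mem_iInter.2 fun k => hm (hgmem k ω)⟩
      have htend : Tendsto (fun m => μ (A m)ᶜ) atTop (𝓝 0) := by
        have h1 : Tendsto (μ ∘ fun m => (A m)ᶜ) atTop (𝓝 (μ (⋂ m, (A m)ᶜ))) :=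
          tendsto_measure_iInter_atTop (μ := μ) (s := fun m => (A m)ᶜ)
            (fun m => ((hAmeas m).compl).nullMeasurableSet)
            (fun m n h => Set.compl_subset_compl.2 (hAmono h)) ⟨0, measure_ne_top _ _⟩
        have h2 : ⋂ m, (A m)ᶜ = ∅ := by
          rw [← Set.compl_iUnion, hAunion, Set.compl_univ]
        rw [h2, measure_empty] at h1
        exact h1
      have hpos : (0 : ENNReal) < ENNReal.ofReal (η / c) := ENNReal.ofReal_pos.2 (by positivity)
      obtain ⟨m, hm⟩ := ((tendsto_order.1 htend).2 _ hpos).exists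
      have hsub : {ω | g m ω ∉ U m} ⊆ (A m)ᶜ := by
        intro ω hω hmem
        exact hω (Set.mem_iInter.1 hmem m)
      exact absurd ((hgbad m).trans_le (measure_mono hsub)) (not_lt.2 hm.le)
    obtain ⟨n₀, hn₀⟩ := key
    -- the cells
    set Cell : ℕ → Set E := fun j => ball (x j) r \ ⋃ i ∈ Finset.range j, ball (x i) r
      with hCelldef
    have hCellmeas : ∀ j, MeasurableSet (Cell j) := fun j =>
      measurableSet_ball.diff (isOpen_biUnion fun i _ => isOpen_ball).measurableSet
    have hCellsub : ∀ j, Cell j ⊆ ball (x j) r := fun j => Set.diff_subset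
    have hCellU : ∀ j ∈ Finset.range (n₀ + 1), Cell j ⊆ U n₀ := fun j hj =>
      (hCellsub j).trans (fun y hy => Set.mem_biUnion hj hy)
    -- the compact target set
    set C : Set E := (fun a : Fin (n₀ + 1) → ℝ => b⁻¹ • ∑ j : Fin (n₀ + 1), a j • x j) ''
      (Set.univ.pi fun _ => Set.Icc (0:ℝ) 1) with hCdef
    have hCcomp : IsCompact C := by
      refine (isCompact_univ_pi fun _ => isCompact_Icc).image ?_
      exact (continuous_finset_sum _ fun j _ =>
        (continuous_apply j).smul continuous_const).const_smul b⁻¹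
    obtain ⟨t, htfin, htsub⟩ := Metric.totallyBounded_iff.1 hCcomp.totallyBounded (ε / 32)
      (by positivity)
    refine ⟨t, htfin, ?_⟩
    rintro z ⟨f, hfL, rfl⟩
    -- measurable modification
    obtain ⟨f', hf'sm, hff'⟩ : ∃ f', StronglyMeasurable f' ∧ f =ᵐ[μ] f' :=
      ⟨(hL f hfL).1.mk f, (hL f hfL).1.stronglyMeasurable_mk, (hL f hfL).1.ae_eq_mk⟩
    have hf'meas : Measurable f' := hf'sm.measurable
    have hint' : Integrable f' μ := (hL f hfL).congr hff'
    have hGm : MeasurableSet {ω | f' ω ∈ F ω} := (measurable_id.prodMk hf'meas) hFgraph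
    have hnm : MeasurableSet {ω | ‖f' ω‖ < c} := measurableSet_lt hf'meas.norm measurable_const
    set S : Set Ω := (B ∩ {ω | f' ω ∈ F ω}) ∩ {ω | ‖f' ω‖ < c} with hSdef
    have hS : MeasurableSet S := (hB.inter hGm).inter hnm
    have hSB : S ⊆ B := fun ω h => h.1.1
    set g : Ω → E := S.indicator f' with hgdef
    have hgmeas : Measurable g := hf'meas.indicator hS
    have hgmem : ∀ ω, g ω ∈ insert (0:E) (F ω) := by
      intro ω
      by_cases hω : ω ∈ S
      · rw [hgdef, Set.indicator_of_mem hω]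
        exact Set.mem_insert_of_mem _ hω.1.2
      · rw [hgdef, Set.indicator_of_notMem hω]
        exact Set.mem_insert _ _
    have hgbound : ∀ ω, ‖g ω‖ ≤ c := by
      intro ω
      by_cases hω : ω ∈ S
      · rw [hgdef, Set.indicator_of_mem hω]; exact le_of_lt hω.2
      · rw [hgdef, Set.indicator_of_notMem hω]; simpa using le_of_lt hcpos
    have hgint : Integrable g μ := hint'.indicator hS
    -- the rounded function
    set φ : Ω → E := fun ω => ∑ j ∈ Finset.range (n₀ + 1),
      (g ⁻¹' (Cell j)).indicator (fun _ => x j) ω with hφdef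
    have hφintble : Integrable φ μ := integrable_finset_sum _ fun j _ =>
      (integrable_const (x j)).indicator (hgmeas (hCellmeas j))
    have hφeq : ∫ ω, φ ω ∂μ = ∑ j ∈ Finset.range (n₀ + 1),
        (μ (g ⁻¹' Cell j)).toReal • x j := by
      rw [hφdef, integral_finset_sum _ fun j _ =>
        (integrable_const (x j)).indicator (hgmeas (hCellmeas j))]
      exact Finset.sum_congr rfl fun j _ => integral_indicator_const (x j) (hgmeas (hCellmeas j))
    have hymem : b⁻¹ • ∫ ω, φ ω ∂μ ∈ C := by
      refine ⟨fun j => (μ (g ⁻¹' Cell (j:ℕ))).toReal, fun j _ => ?_, ?_⟩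
      · constructor
        · exact ENNReal.toReal_nonneg
        · exact ENNReal.toReal_le_of_le_ofReal zero_le_one (by simpa using prob_le_one)
      · dsimp only
        rw [hφeq, Fin.sum_univ_eq_sum_range (fun j => (μ (g ⁻¹' Cell j)).toReal • x j) (n₀ + 1)]
    -- pointwise estimates for g - φ
    have hφgood : ∀ ω, g ω ∈ U n₀ → ‖g ω - φ ω‖ ≤ r := by
      intro ω hω
      have hex : ∃ j, g ω ∈ ball (x j) r := by
        simp only [hUdef, Set.mem_iUnion, Finset.mem_range] at hω
        obtain ⟨j, _, hj⟩ := hω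
        exact ⟨j, hj⟩
      set j₀ := Nat.find hex with hj₀def
      have hj₀ : g ω ∈ ball (x j₀) r := Nat.find_spec hex
      have hj₀le : j₀ ∈ Finset.range (n₀ + 1) := by
        simp only [hUdef, Set.mem_iUnion, Finset.mem_range] at hω
        obtain ⟨j, hjn, hj⟩ := hω
        exact Finset.mem_range.2 (lt_of_le_of_lt (Nat.find_min' hex hj) hjn)
      have hcell : g ω ∈ Cell j₀ := by
        refine ⟨hj₀, ?_⟩
        simp only [Set.mem_iUnion, Finset.mem_range]
        rintro ⟨i, hi, hmem⟩
        exact Nat.find_min hex hi hmem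
      have hφω : φ ω = x j₀ := by
        simp only [hφdef]
        rw [Finset.sum_eq_single_of_mem j₀ hj₀le]
        · exact Set.indicator_of_mem (show ω ∈ g ⁻¹' Cell j₀ from hcell) _
        · intro i hi hne
          refine Set.indicator_of_notMem (fun hmem => ?_) _
          have hgi : g ω ∈ Cell i := hmem
          rcases hne.lt_or_gt with hlt | hgt
          · exact Nat.find_min hex hlt (hCellsub i hgi)
          · exact hgi.2 (Set.mem_biUnion (Finset.mem_range.2 hgt) hj₀)
      rw [hφω]
      have := Metric.mem_ball.1 hcell.1
      rw [dist_eq_norm] at this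
      exact le_of_lt this
    have hφbad : ∀ ω, g ω ∉ U n₀ → ‖g ω - φ ω‖ ≤ c := by
      intro ω hω
      have hφω : φ ω = 0 := by
        simp only [hφdef]
        refine Finset.sum_eq_zero fun j hj => ?_
        refine Set.indicator_of_notMem ?_ _
        exact fun hmem => hω (hCellU j hj hmem)
      rw [hφω, sub_zero]
      exact hgbound ω
    -- integral error: g vs φ
    set good : Set Ω := g ⁻¹' (U n₀) with hgooddef
    have hgoodm : MeasurableSet good := hgmeas (hUopen n₀).measurableSet
    have hnormint : Integrable (fun ω => ‖g ω - φ ω‖) μ := (hgint.sub hφintble).norm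
    have hμbad : (μ goodᶜ).toReal ≤ η / c := by
      have h1 : μ goodᶜ ≤ ENNReal.ofReal (η / c) := by
        have : goodᶜ = {ω | g ω ∉ U n₀} := rfl
        rw [this]
        exact hn₀ g hgmeas hgmem
      exact ENNReal.toReal_le_of_le_ofReal (by positivity) h1
    have herr2 : ‖(∫ ω, g ω ∂μ) - ∫ ω, φ ω ∂μ‖ ≤ r + η := by
      rw [← integral_sub hgint hφintble]
      refine le_trans (norm_integral_le_integral_norm _) ?_
      rw [← integral_add_compl hgoodm hnormint]
      have hbd1 : ∫ ω in good, ‖g ω - φ ω‖ ∂μ ≤ r := by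
        calc ∫ ω in good, ‖g ω - φ ω‖ ∂μ ≤ ∫ _ in good, r ∂μ := by
              refine setIntegral_mono_on hnormint.integrableOn
                (integrableOn_const (measure_ne_top μ good)) hgoodm ?_
              intro ω hω
              exact hφgood ω hω
          _ = (μ good).toReal • r := setIntegral_const r
          _ ≤ 1 * r := by
              rw [smul_eq_mul]
              exact mul_le_mul_of_nonneg_right
                (ENNReal.toReal_le_of_le_ofReal zero_le_one (by simpa using prob_le_one))
                (le_of_lt hr)
          _ = r := one_mul r
      have hbd2 : ∫ ω in goodᶜ, ‖g ω - φ ω‖ ∂μ ≤ η := by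
        calc ∫ ω in goodᶜ, ‖g ω - φ ω‖ ∂μ ≤ ∫ _ in goodᶜ, c ∂μ := by
              refine setIntegral_mono_on hnormint.integrableOn
                (integrableOn_const (measure_ne_top μ goodᶜ)) hgoodm.compl ?_
              intro ω hω
              exact hφbad ω hω
          _ = (μ goodᶜ).toReal • c := setIntegral_const c
          _ ≤ (η / c) * c := by
              rw [smul_eq_mul]
              exact mul_le_mul_of_nonneg_right hμbad (le_of_lt hcpos)
          _ = η := by field_simp
      linarith
    -- integral error: f over B vs g
    have herr1 : ‖(∫ ω in B, f ω ∂μ) - ∫ ω, g ω ∂μ‖ ≤ 2 * η := by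
      have hBf : ∫ ω in B, f ω ∂μ = ∫ ω in B, f' ω ∂μ :=
        setIntegral_congr_ae hB (hff'.mono fun ω h _ => h)
      have hgS : ∫ ω, g ω ∂μ = ∫ ω in S, f' ω ∂μ := integral_indicator hS
      have hsplitB : ∫ ω in B, f' ω ∂μ = (∫ ω in S, f' ω ∂μ) + ∫ ω in B \ S, f' ω ∂μ := by
        rw [← setIntegral_union Set.disjoint_sdiff_right (hB.diff hS)
          hint'.integrableOn hint'.integrableOn, Set.union_diff_cancel hSB]
      rw [hBf, hgS, hsplitB, add_sub_cancel_left]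
      refine le_trans (norm_integral_le_integral_norm _) ?_
      set D := B \ S with hDdef
      have hDm : MeasurableSet D := hB.diff hS
      have hcle : MeasurableSet {ω | c ≤ ‖f' ω‖} := measurableSet_le measurable_const hf'meas.norm
      have hDsplit : D = (D ∩ {ω | c ≤ ‖f' ω‖}) ∪ (D ∩ {ω | ‖f' ω‖ < c}) := by
        rw [← Set.inter_union_distrib_left]
        have : {ω | c ≤ ‖f' ω‖} ∪ {ω | ‖f' ω‖ < c} = Set.univ := by
          ext ω; simp [le_or_gt]
        rw [this, Set.inter_univ]
      have hdisj : Disjoint (D ∩ {ω | c ≤ ‖f' ω‖}) (D ∩ {ω | ‖f' ω‖ < c}) := by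
        refine Set.disjoint_left.2 ?_
        rintro ω ⟨-, h1⟩ ⟨-, h2⟩
        simp only [Set.mem_setOf_eq] at h1 h2
        exact (not_lt.2 h1) h2
      have hsplitD : ∫ ω in D, ‖f' ω‖ ∂μ = (∫ ω in D ∩ {ω | c ≤ ‖f' ω‖}, ‖f' ω‖ ∂μ) +
          ∫ ω in D ∩ {ω | ‖f' ω‖ < c}, ‖f' ω‖ ∂μ := by
        conv_lhs => rw [hDsplit]
        exact setIntegral_union hdisj (hDm.inter hnm)
          hint'.norm.integrableOn hint'.norm.integrableOn
      have hbd1 : ∫ ω in D ∩ {ω | c ≤ ‖f' ω‖}, ‖f' ω‖ ∂μ ≤ η := by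
        have step1 : ∫ ω in D ∩ {ω | c ≤ ‖f' ω‖}, ‖f' ω‖ ∂μ ≤
            ∫ ω in {ω | c ≤ ‖f' ω‖}, ‖f' ω‖ ∂μ :=
          setIntegral_mono_set hint'.norm.integrableOn
            (ae_restrict_of_ae (ae_of_all _ fun ω => norm_nonneg _))
            (ae_of_all _ fun ω hω => hω.2)
        have step2 : ∫ ω in {ω | c ≤ ‖f' ω‖}, ‖f' ω‖ ∂μ =
            ∫ ω in {ω | c ≤ ‖f' ω‖}, ‖f ω‖ ∂μ :=
          setIntegral_congr_ae hcle (hff'.mono fun ω h _ => by rw [h])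
        have step3 : ∫ ω in {ω | c ≤ ‖f' ω‖}, ‖f ω‖ ∂μ =
            ∫ ω in {ω | c ≤ ‖f ω‖}, ‖f ω‖ ∂μ := by
          refine setIntegral_congr_set ?_
          filter_upwards [hff'] with ω h
          change (c ≤ ‖f' ω‖) = (c ≤ ‖f ω‖)
          rw [h]
        rw [step2, step3] at step1
        exact le_trans step1 (hcui f hfL)
      have hbd2 : ∫ ω in D ∩ {ω | ‖f' ω‖ < c}, ‖f' ω‖ ∂μ ≤ η := by
        have hsubF : D ∩ {ω | ‖f' ω‖ < c} ⊆ {ω | f' ω ∉ F ω} := by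
          rintro ω ⟨⟨hωB, hωS⟩, hωc⟩ hmem
          exact hωS ⟨⟨hωB, hmem⟩, hωc⟩
        have hμF : μ {ω | f' ω ∉ F ω} ≤ ENNReal.ofReal (η / c) := by
          have hsub2 : {ω | f' ω ∉ F ω} ⊆ {ω | f ω ∉ F ω} ∪ {ω | ¬ f ω = f' ω} := by
            intro ω hω
            by_cases h : f ω = f' ω
            · exact Or.inl (by rw [Set.mem_setOf_eq, h]; exact hω)
            · exact Or.inr h
          calc μ {ω | f' ω ∉ F ω} ≤ μ ({ω | f ω ∉ F ω} ∪ {ω | ¬ f ω = f' ω}) :=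
                measure_mono hsub2
            _ ≤ μ {ω | f ω ∉ F ω} + μ {ω | ¬ f ω = f' ω} := measure_union_le _ _
            _ ≤ ENNReal.ofReal (η / c) + 0 := by
                refine add_le_add (hFtight f hfL) ?_
                rw [ae_iff.1 hff']
            _ = ENNReal.ofReal (η / c) := add_zero _
        calc ∫ ω in D ∩ {ω | ‖f' ω‖ < c}, ‖f' ω‖ ∂μ ≤ ∫ _ in D ∩ {ω | ‖f' ω‖ < c}, c ∂μ := by
              refine setIntegral_mono_on hint'.norm.integrableOn
                (integrableOn_const (measure_ne_top _ _)) (hDm.inter hnm) ?_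
              intro ω hω
              exact le_of_lt hω.2
          _ = (μ (D ∩ {ω | ‖f' ω‖ < c})).toReal • c := setIntegral_const c
          _ ≤ (η / c) * c := by
              rw [smul_eq_mul]
              refine mul_le_mul_of_nonneg_right ?_ (le_of_lt hcpos)
              refine ENNReal.toReal_le_of_le_ofReal (by positivity) ?_
              exact le_trans (measure_mono hsubF) hμF
          _ = η := by field_simp
      rw [hsplitD]
      linarith
    -- combine
    have htotal : ‖(∫ ω in B, f ω ∂μ) - ∫ ω, φ ω ∂μ‖ ≤ 3 * η + r := by
      have := norm_sub_le_norm_sub_add_norm_sub (∫ ω in B, f ω ∂μ) (∫ ω, g ω ∂μ) (∫ ω, φ ω ∂μ)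
      linarith [herr1, herr2, this]
    have hdist : dist (avg μ f B) (b⁻¹ • ∫ ω, φ ω ∂μ) ≤ 7 / 16 * ε := by
      have havg : avg μ f B = b⁻¹ • ∫ ω in B, f ω ∂μ := rfl
      rw [havg, dist_eq_norm, ← smul_sub, norm_smul, Real.norm_eq_abs,
        abs_of_nonneg (inv_nonneg.2 (le_of_lt hb))]
      calc b⁻¹ * ‖(∫ ω in B, f ω ∂μ) - ∫ ω, φ ω ∂μ‖ ≤ b⁻¹ * (3 * η + r) := by
            exact mul_le_mul_of_nonneg_left htotal (inv_nonneg.2 (le_of_lt hb))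
        _ = 7 / 16 * ε := by
            rw [hηdef, hrdef]
            field_simp
            ring
    obtain ⟨y₁, hy₁t, hy₁⟩ := Set.mem_iUnion₂.1 (htsub hymem)
    refine Set.mem_iUnion₂.2 ⟨y₁, hy₁t, ?_⟩
    rw [Metric.mem_ball]
    calc dist (avg μ f B) y₁ ≤ dist (avg μ f B) (b⁻¹ • ∫ ω, φ ω ∂μ) +
          dist (b⁻¹ • ∫ ω, φ ω ∂μ) y₁ := dist_triangle _ _ _
      _ < 7 / 16 * ε + ε / 32 := add_lt_add_of_le_of_lt hdist (Metric.mem_ball.1 hy₁)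
      _ ≤ ε := by linarith
  exact isCompact_iff_totallyBounded_isComplete.2 ⟨hTB.closure, isClosed_closure.isComplete⟩
end

section
/- Let (f_k) be a Pettis uniformly integrable sequence in L¹(μ, E). If for each subsequence (f_{k_j}), each ε > 0, and each measurable B with μ(B) > 0, there exists a measurable A ⊆ B with μ(A) > 0 such that liminf_j sup_{x* ∈ B_{E*}} (∫_A |x*(f_{k_j})| dμ)/μ(A) < ε, then ‖f_k‖_Pettis → 0. -/
open MeasureTheory Filter Topology

/-- The Pettis (semi)norm on `L¹(μ, E)`. -/
noncomputable def pettisNorm {Ω E : Type*} [MeasurableSpace Ω] [NormedAddCommGroup E]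
    [NormedSpace ℝ E] (μ : Measure Ω) (f : Ω → E) : ℝ :=
  ⨆ x' : {x' : StrongDual ℝ E // ‖x'‖ ≤ 1}, ∫ ω, |x'.1 (f ω)| ∂μ

section Aux
set_option linter.unusedSectionVars false

variable {Ω E : Type*} [MeasurableSpace Ω] [NormedAddCommGroup E] [NormedSpace ℝ E]
variable {μ : Measure Ω} [IsProbabilityMeasure μ]

instance ballNE : Nonempty {x' : StrongDual ℝ E // ‖x'‖ ≤ 1} := ⟨0, by simp⟩

lemma int_abs {g : Ω → E} (hg : Integrable g μ) (x' : StrongDual ℝ E) :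
    Integrable (fun ω => |x' (g ω)|) μ :=
  (ContinuousLinearMap.integrable_comp x' hg).abs

/-- Admissible sets for the exhaustion argument. -/
def Adm (μ : Measure Ω) (f : ℕ → Ω → E) (ε' : ℝ) (m : ℕ → ℕ) (U A : Set Ω) : Prop :=
  A ⊆ Uᶜ ∧ MeasurableSet A ∧ 0 < μ A ∧
  ∃ᶠ j in Filter.atTop, ∀ x' : {x' : StrongDual ℝ E // ‖x'‖ ≤ 1},
    ∫ ω in A, |x'.1 (f (m j) ω)| ∂μ ≤ ε' * (μ A).toReal

/-- State for the recursive construction. -/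
structure PState (μ : Measure Ω) (f : ℕ → Ω → E) (φ : ℕ → ℕ) (ε' : ℝ) where
  ψ : ℕ → ℕ
  U : Set Ω
  hψ : StrictMono ψ
  hU : MeasurableSet U
  hbound : ∀ j, ∀ x' : {x' : StrongDual ℝ E // ‖x'‖ ≤ 1},
    ∫ ω in U, |x'.1 (f (φ (ψ j)) ω)| ∂μ ≤ ε' * (μ U).toReal

lemma ui_conseq {f : ℕ → Ω → E} (hf : ∀ k, Integrable (f k) μ)
    (hui : ∀ ε : ℝ, 0 < ε → ∃ c : ℝ, ∀ k, ∀ x' : StrongDual ℝ E, ‖x'‖ ≤ 1 →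
      ∫ ω in {ω | c ≤ |x' (f k ω)|}, |x' (f k ω)| ∂μ ≤ ε)
    {ε : ℝ} (hε : 0 < ε) :
    ∃ c : ℝ, 0 < c ∧ ∀ k, ∀ x' : StrongDual ℝ E, ‖x'‖ ≤ 1 → ∀ S : Set Ω,
      ∫ ω in S, |x' (f k ω)| ∂μ ≤ c * (μ S).toReal + ε := by
  obtain ⟨c, hc⟩ := hui ε hε
  refine ⟨max c 1, lt_of_lt_of_le one_pos (le_max_right _ _), fun k x' hx' S => ?_⟩
  set c' := max c 1 with hc'
  -- measurable representative
  obtain ⟨g, hgsm, hgf⟩ := (hf k).1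
  have hgint : Integrable g μ := (hf k).congr hgf
  have habs : Measurable fun ω => |x' (g ω)| :=
    ((continuous_abs.comp x'.continuous).comp_stronglyMeasurable hgsm).measurable
  set T : Set Ω := {ω | c ≤ |x' (g ω)|} with hT
  have hTm : MeasurableSet T := habs measurableSet_Ici
  have key1 : ∫ ω in S, |x' (f k ω)| ∂μ = ∫ ω in S, |x' (g ω)| ∂μ := by
    refine integral_congr_ae ?_
    exact (ae_restrict_of_ae (hgf.mono fun ω hω => by show |x' (f k ω)| = _; rw [hω]))
  have hptwise : ∀ ω, |x' (g ω)| ≤ c' + T.indicator (fun ω => |x' (g ω)|) ω := by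
    intro ω
    by_cases hω : ω ∈ T
    · rw [Set.indicator_of_mem hω]
      have : (0:ℝ) < c' := lt_of_lt_of_le one_pos (le_max_right _ _)
      linarith
    · rw [Set.indicator_of_notMem hω]
      have : |x' (g ω)| < c := lt_of_not_ge hω
      have : c ≤ c' := le_max_left _ _
      linarith
  have hindint : Integrable (T.indicator fun ω => |x' (g ω)|) μ :=
    (int_abs hgint x').indicator hTm
  have key2 : ∫ ω in S, |x' (g ω)| ∂μ
      ≤ ∫ ω in S, (c' + T.indicator (fun ω => |x' (g ω)|) ω) ∂μ :=
    integral_mono (int_abs hgint x').restrict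
      ((integrable_const c').add hindint).restrict hptwise
  have key3 : ∫ ω in S, (c' + T.indicator (fun ω => |x' (g ω)|) ω) ∂μ
      = c' * (μ S).toReal + ∫ ω in S, T.indicator (fun ω => |x' (g ω)|) ω ∂μ := by
    rw [integral_add (integrable_const c').restrict hindint.restrict,
      setIntegral_const, smul_eq_mul, mul_comm]; rfl
  have key4 : ∫ ω in S, T.indicator (fun ω => |x' (g ω)|) ω ∂μ
      ≤ ∫ ω, T.indicator (fun ω => |x' (g ω)|) ω ∂μ :=
    integral_mono_measure Measure.restrict_le_self
      (Eventually.of_forall fun ω => Set.indicator_nonneg (fun ω _ => abs_nonneg _) ω)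
      hindint
  have key5 : ∫ ω, T.indicator (fun ω => |x' (g ω)|) ω ∂μ = ∫ ω in T, |x' (g ω)| ∂μ :=
    integral_indicator hTm
  have key6 : ∫ ω in T, |x' (g ω)| ∂μ = ∫ ω in {ω | c ≤ |x' (f k ω)|}, |x' (f k ω)| ∂μ := by
    have hTT' : T =ᵐ[μ] {ω | c ≤ |x' (f k ω)|} := by
      refine hgf.mono fun ω hω => ?_
      show (c ≤ |x' (g ω)|) = (c ≤ |x' (f k ω)|)
      rw [hω]
    rw [Measure.restrict_congr_set hTT']
    refine integral_congr_ae (ae_restrict_of_ae (hgf.mono fun ω hω => ?_))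
    show |x' (g ω)| = |x' (f k ω)|
    rw [hω]
  have := hc k x' hx'
  calc ∫ ω in S, |x' (f k ω)| ∂μ ≤ c' * (μ S).toReal
        + ∫ ω in {ω | c ≤ |x' (f k ω)|}, |x' (f k ω)| ∂μ := by
        rw [key1]; rw [← key6, ← key5]; linarith [key2, key3.le, key4]
    _ ≤ c' * (μ S).toReal + ε := by linarith

lemma step_max {f : ℕ → Ω → E} {ε' : ℝ} {m : ℕ → ℕ} {U : Set Ω}
    (hne : ∃ A, Adm μ f ε' m U A) :
    ∃ A, Adm μ f ε' m U A ∧ ∀ A', Adm μ f ε' m U A' → μ A' ≤ 2 * μ A := by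
  set s := ⨆ (A : Set Ω) (_ : Adm μ f ε' m U A), μ A with hs
  have hs_le : s ≤ 1 := iSup₂_le fun A hA => prob_le_one
  have hs_pos : 0 < s := by
    obtain ⟨A, hA⟩ := hne
    exact lt_of_lt_of_le hA.2.2.1 (le_iSup₂ (f := fun A _ => μ A) A hA)
  have h2 : s / 2 < s :=
    ENNReal.half_lt_self hs_pos.ne' (lt_of_le_of_lt hs_le ENNReal.one_lt_top).ne
  rw [hs] at h2
  rw [lt_iSup_iff] at h2
  obtain ⟨A, hA2⟩ := h2
  rw [lt_iSup_iff] at hA2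
  obtain ⟨hA, hlt⟩ := hA2
  refine ⟨A, hA, fun A' hA' => ?_⟩
  have h1 : μ A' ≤ s := le_iSup₂ (f := fun A _ => μ A) A' hA'
  have h3 : s < μ A * 2 := by
    rw [← ENNReal.div_lt_iff (Or.inl two_ne_zero) (Or.inl ENNReal.ofNat_ne_top)]
    exact hlt
  calc μ A' ≤ s := h1
    _ ≤ 2 * μ A := by rw [mul_comm]; exact h3.le


lemma exists_adm {f : ℕ → Ω → E}
    (h : ∀ k : ℕ → ℕ, StrictMono k → ∀ ε : ℝ, 0 < ε →
      ∀ B : Set Ω, MeasurableSet B → 0 < μ B →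
      ∃ A ⊆ B, MeasurableSet A ∧ 0 < μ A ∧
        Filter.liminf (fun j =>
          ⨆ x' : {x' : StrongDual ℝ E // ‖x'‖ ≤ 1},
            (∫ ω in A, |x'.1 (f (k j) ω)| ∂μ) / (μ A).toReal) Filter.atTop < ε)
    {C : ℝ} (hC : ∀ n, ∀ x' : StrongDual ℝ E, ‖x'‖ ≤ 1 → ∀ S : Set Ω,
      ∫ ω in S, |x' (f n ω)| ∂μ ≤ C)
    {ε' : ℝ} (hε' : 0 < ε') {m : ℕ → ℕ} (hm : StrictMono m)
    {U : Set Ω} (hU : MeasurableSet U) (hUc : 0 < μ Uᶜ) :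
    ∃ A, Adm μ f ε' m U A := by
  obtain ⟨A, hAB, hAm, hApos, hlim⟩ := h m hm ε' hε' Uᶜ hU.compl hUc
  have ht : 0 < (μ A).toReal := ENNReal.toReal_pos hApos.ne' (measure_ne_top μ A)
  have hub : ∀ j, (⨆ x' : {x' : StrongDual ℝ E // ‖x'‖ ≤ 1},
      (∫ ω in A, |x'.1 (f (m j) ω)| ∂μ) / (μ A).toReal) ≤ C / (μ A).toReal := by
    intro j
    refine ciSup_le fun x' => ?_
    gcongr
    exact hC (m j) x'.1 x'.2 A
  have hcob : IsCoboundedUnder (· ≥ ·) Filter.atTop (fun j =>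
      ⨆ x' : {x' : StrongDual ℝ E // ‖x'‖ ≤ 1},
        (∫ ω in A, |x'.1 (f (m j) ω)| ∂μ) / (μ A).toReal) :=
    isCoboundedUnder_ge_of_le Filter.atTop (x := C / (μ A).toReal) hub
  have hfreq := Filter.frequently_lt_of_liminf_lt hcob hlim
  refine ⟨A, hAB, hAm, hApos, hfreq.mono fun j hj x' => ?_⟩
  have hbdd : BddAbove (Set.range fun x' : {x' : StrongDual ℝ E // ‖x'‖ ≤ 1} =>
      (∫ ω in A, |x'.1 (f (m j) ω)| ∂μ) / (μ A).toReal) := by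
    refine ⟨C / (μ A).toReal, ?_⟩
    rintro y ⟨x', rfl⟩
    show (∫ ω in A, |x'.1 (f (m j) ω)| ∂μ) / (μ A).toReal ≤ C / (μ A).toReal
    gcongr
    exact hC (m j) x'.1 x'.2 A
  have h1 : (∫ ω in A, |x'.1 (f (m j) ω)| ∂μ) / (μ A).toReal < ε' :=
    lt_of_le_of_lt (le_ciSup hbdd x') hj
  have := (div_lt_iff₀ ht).mp h1
  linarith

lemma pstep {f : ℕ → Ω → E} (hf : ∀ k, Integrable (f k) μ)
    (h : ∀ k : ℕ → ℕ, StrictMono k → ∀ ε : ℝ, 0 < ε →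
      ∀ B : Set Ω, MeasurableSet B → 0 < μ B →
      ∃ A ⊆ B, MeasurableSet A ∧ 0 < μ A ∧
        Filter.liminf (fun j =>
          ⨆ x' : {x' : StrongDual ℝ E // ‖x'‖ ≤ 1},
            (∫ ω in A, |x'.1 (f (k j) ω)| ∂μ) / (μ A).toReal) Filter.atTop < ε)
    {C : ℝ} (hC : ∀ n, ∀ x' : StrongDual ℝ E, ‖x'‖ ≤ 1 → ∀ S : Set Ω,
      ∫ ω in S, |x' (f n ω)| ∂μ ≤ C)
    {ε' : ℝ} (hε' : 0 < ε') {φ : ℕ → ℕ} (hφ : StrictMono φ)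
    (p : PState μ f φ ε') :
    ∃ q : PState μ f φ ε' × Set Ω, 0 < μ p.Uᶜ →
      (q.1.U = p.U ∪ q.2 ∧ Adm μ f ε' (φ ∘ p.ψ) p.U q.2 ∧
       (∀ A', Adm μ f ε' (φ ∘ p.ψ) p.U A' → μ A' ≤ 2 * μ q.2) ∧
       ∃ θ, StrictMono θ ∧ q.1.ψ = p.ψ ∘ θ) := by
  by_cases hp : 0 < μ p.Uᶜ
  · obtain ⟨A, hA, hmax⟩ := step_max (exists_adm h hC hε' (hφ.comp p.hψ) p.hU hp)
    obtain ⟨hAU, hAm, hApos, hfreq⟩ := hA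
    obtain ⟨θ, hθ, hθP⟩ := extraction_of_frequently_atTop hfreq
    have hdisj : Disjoint p.U A := Set.subset_compl_iff_disjoint_left.mp hAU
    have hμadd : (μ (p.U ∪ A)).toReal = (μ p.U).toReal + (μ A).toReal := by
      rw [measure_union hdisj hAm,
        ENNReal.toReal_add (measure_ne_top μ _) (measure_ne_top μ _)]
    refine ⟨(⟨p.ψ ∘ θ, p.U ∪ A, p.hψ.comp hθ, p.hU.union hAm, ?_⟩, A),
      fun _ => ⟨rfl, ⟨hAU, hAm, hApos, hfreq⟩, hmax, θ, hθ, rfl⟩⟩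
    intro j x'
    have hsplit : ∫ ω in p.U ∪ A, |x'.1 (f (φ ((p.ψ ∘ θ) j)) ω)| ∂μ
        = (∫ ω in p.U, |x'.1 (f (φ ((p.ψ ∘ θ) j)) ω)| ∂μ)
          + ∫ ω in A, |x'.1 (f (φ ((p.ψ ∘ θ) j)) ω)| ∂μ :=
      setIntegral_union hdisj hAm (int_abs (hf _) x'.1).integrableOn
        (int_abs (hf _) x'.1).integrableOn
    rw [hsplit, hμadd, mul_add]
    exact add_le_add (p.hbound (θ j) x') (hθP j x')
  · exact ⟨(p, ∅), fun hp' => absurd hp' hp⟩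

lemma key {f : ℕ → Ω → E} (hf : ∀ k, Integrable (f k) μ)
    (hui : ∀ ε : ℝ, 0 < ε → ∃ c : ℝ, ∀ k, ∀ x' : StrongDual ℝ E, ‖x'‖ ≤ 1 →
      ∫ ω in {ω | c ≤ |x' (f k ω)|}, |x' (f k ω)| ∂μ ≤ ε)
    (h : ∀ k : ℕ → ℕ, StrictMono k → ∀ ε : ℝ, 0 < ε →
      ∀ B : Set Ω, MeasurableSet B → 0 < μ B →
      ∃ A ⊆ B, MeasurableSet A ∧ 0 < μ A ∧
        Filter.liminf (fun j =>
          ⨆ x' : {x' : StrongDual ℝ E // ‖x'‖ ≤ 1},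
            (∫ ω in A, |x'.1 (f (k j) ω)| ∂μ) / (μ A).toReal) Filter.atTop < ε)
    {ε : ℝ} (hε : 0 < ε) {φ : ℕ → ℕ} (hφ : StrictMono φ) :
    ∃ j, pettisNorm μ (f (φ j)) < ε := by
  obtain ⟨c, hc0, hc⟩ := ui_conseq hf hui (show (0:ℝ) < ε/4 by linarith)
  have hε' : (0:ℝ) < ε/4 := by linarith
  have hC : ∀ n, ∀ x' : StrongDual ℝ E, ‖x'‖ ≤ 1 → ∀ S : Set Ω,
      ∫ ω in S, |x' (f n ω)| ∂μ ≤ c + ε/4 := by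
    intro n x' hx' S
    have h1 := hc n x' hx' S
    have h2 : (μ S).toReal ≤ 1 := by
      have := ENNReal.toReal_mono ENNReal.one_ne_top (prob_le_one (μ := μ) (s := S))
      simpa using this
    nlinarith
  let p0 : PState μ f φ (ε/4) :=
    ⟨id, ∅, strictMono_id, MeasurableSet.empty, by intro j x'; simp⟩
  choose Gq hGq using (pstep hf h hC hε' hφ)
  set st : ℕ → PState μ f φ (ε/4) := fun n => (fun p => (Gq p).1)^[n] p0 with hst
  have hsucc : ∀ n, st (n+1) = (Gq (st n)).1 := fun n =>
    Function.iterate_succ_apply' _ n p0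
  set δ := ENNReal.ofReal (ε/(4*c)) with hδ
  have hδ0 : 0 < δ := ENNReal.ofReal_pos.mpr (by positivity)
  by_cases hend : ∃ n, μ (st n).Uᶜ < δ
  · obtain ⟨n, hn⟩ := hend
    refine ⟨(st n).ψ 0, ?_⟩
    have hlt : 3*(ε/4) < ε := by linarith
    refine lt_of_le_of_lt (ciSup_le fun x' => ?_) hlt
    have hsplit : (∫ ω in (st n).U, |x'.1 (f (φ ((st n).ψ 0)) ω)| ∂μ)
        + ∫ ω in (st n).Uᶜ, |x'.1 (f (φ ((st n).ψ 0)) ω)| ∂μ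
        = ∫ ω, |x'.1 (f (φ ((st n).ψ 0)) ω)| ∂μ :=
      integral_add_compl (st n).hU (int_abs (hf _) x'.1)
    have b1 : ∫ ω in (st n).U, |x'.1 (f (φ ((st n).ψ 0)) ω)| ∂μ
        ≤ (ε/4) * (μ (st n).U).toReal := (st n).hbound 0 x'
    have hU1 : (μ (st n).U).toReal ≤ 1 := by
      have := ENNReal.toReal_mono ENNReal.one_ne_top (prob_le_one (μ := μ) (s := (st n).U))
      simpa using this
    have b2 : ∫ ω in (st n).Uᶜ, |x'.1 (f (φ ((st n).ψ 0)) ω)| ∂μ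
        ≤ c * (μ (st n).Uᶜ).toReal + ε/4 := hc _ x'.1 x'.2 _
    have hcompl : (μ (st n).Uᶜ).toReal ≤ ε/(4*c) := by
      have h1 : (μ (st n).Uᶜ).toReal ≤ δ.toReal :=
        ENNReal.toReal_mono (by rw [hδ]; exact ENNReal.ofReal_ne_top) hn.le
      rwa [hδ, ENNReal.toReal_ofReal (by positivity)] at h1
    have hcc : c * (μ (st n).Uᶜ).toReal ≤ ε/4 := by
      have := mul_le_mul_of_nonneg_left hcompl hc0.le
      calc c * (μ (st n).Uᶜ).toReal ≤ c * (ε/(4*c)) := this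
        _ = ε/4 := by field_simp
    nlinarith [(μ (st n).U).toReal, ENNReal.toReal_nonneg (a := μ (st n).U)]
  · push_neg at hend
    exfalso
    have hpos : ∀ n, 0 < μ (st n).Uᶜ := fun n => lt_of_lt_of_le hδ0 (hend n)
    set A : ℕ → Set Ω := fun n => (Gq (st n)).2 with hA
    have hU1 : ∀ n, (st (n+1)).U = (st n).U ∪ A n := fun n => by
      rw [hsucc n]; exact (hGq (st n) (hpos n)).1
    have hAdm : ∀ n, Adm μ f (ε/4) (φ ∘ (st n).ψ) (st n).U (A n) := fun n =>
      (hGq (st n) (hpos n)).2.1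
    have hmax : ∀ n A', Adm μ f (ε/4) (φ ∘ (st n).ψ) (st n).U A' → μ A' ≤ 2 * μ (A n) :=
      fun n => (hGq (st n) (hpos n)).2.2.1
    have hθex : ∀ n, ∃ θ, StrictMono θ ∧ (st (n+1)).ψ = (st n).ψ ∘ θ := fun n => by
      rw [hsucc n]; exact (hGq (st n) (hpos n)).2.2.2
    choose θ hθmono hθeq using hθex
    have hUmono : Monotone fun n => (st n).U :=
      monotone_nat_of_le_succ fun n => by rw [hU1 n]; exact Set.subset_union_left
    have hdkey : ∀ i j, i < j → Disjoint (A i) (A j) := by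
      intro i j hij
      have h1 : A i ⊆ (st (i+1)).U := by rw [hU1 i]; exact Set.subset_union_right
      have h2 : (st (i+1)).U ⊆ (st j).U := hUmono (Nat.succ_le_of_lt hij)
      have h3 : A j ⊆ (st j).Uᶜ := (hAdm j).1
      exact Set.disjoint_of_subset (h1.trans h2) h3 disjoint_compl_right
    have hdisj : Pairwise (Function.onFun Disjoint fun n => A n) := by
      intro i j hij
      rcases lt_or_gt_of_ne hij with h' | h'
      · exact hdkey i j h'
      · exact (hdkey j i h').symm
    have hsum : ∑' n, μ (A n) ≠ ⊤ := by
      rw [← measure_iUnion hdisj (fun n => (hAdm n).2.1)]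
      exact measure_ne_top μ _
    have hto0 : Tendsto (fun n => μ (A n)) atTop (𝓝 0) :=
      ENNReal.tendsto_atTop_zero_of_tsum_ne_top hsum
    have hRmeas : MeasurableSet (⋃ n, (st n).U) :=
      MeasurableSet.iUnion fun n => (st n).hU
    have hRpos : 0 < μ (⋃ n, (st n).U)ᶜ := by
      rw [Set.compl_iUnion]
      have hmeq : μ (⋂ n, (st n).Uᶜ) = ⨅ n, μ (st n).Uᶜ :=
        Antitone.measure_iInter
          (fun i j hij => Set.compl_subset_compl.mpr (hUmono hij))
          (fun n => ((st n).hU.compl).nullMeasurableSet) ⟨0, measure_ne_top μ _⟩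
      rw [hmeq]
      exact lt_of_lt_of_le hδ0 (le_iInf hend)
    set χ : ℕ → ℕ := fun n => (st n).ψ n with hχ
    have hχmono : StrictMono χ := strictMono_nat_of_lt_succ fun n => by
      show (st n).ψ n < (st (n+1)).ψ (n+1)
      rw [hθeq n]
      exact lt_of_lt_of_le ((st n).hψ (Nat.lt_succ_self n))
        ((st n).hψ.monotone (hθmono n).le_apply)
    have htrans : ∀ i n, i ≤ n → ∀ s, ∃ t, s ≤ t ∧ (st n).ψ s = (st i).ψ t := by
      intro i n hin
      induction n, hin using Nat.le_induction with
      | base => exact fun s => ⟨s, le_refl s, rfl⟩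
      | succ n hin ih =>
        intro s
        obtain ⟨t, ht1, ht2⟩ := ih (θ n s)
        refine ⟨t, le_trans (hθmono n).le_apply ht1, ?_⟩
        rw [hθeq n]
        exact ht2
    obtain ⟨A', hsub, hAm', hpos', hfreq'⟩ :=
      exists_adm h hC hε' (hφ.comp hχmono) hRmeas hRpos
    have hadm_i : ∀ i, Adm μ f (ε/4) (φ ∘ (st i).ψ) (st i).U A' := by
      intro i
      refine ⟨hsub.trans (Set.compl_subset_compl.mpr
        (Set.subset_iUnion (fun n => (st n).U) i)), hAm', hpos', ?_⟩
      rw [frequently_atTop] at hfreq' ⊢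
      intro T
      obtain ⟨j, hj1, hj2⟩ := hfreq' (max i T)
      obtain ⟨t, ht1, ht2⟩ := htrans i j (le_trans (le_max_left i T) hj1) j
      refine ⟨t, le_trans (le_trans (le_max_right i T) hj1) ht1, fun x' => ?_⟩
      have heq : (φ ∘ (st i).ψ) t = (φ ∘ χ) j := by
        simp only [Function.comp, hχ, ← ht2]
      rw [heq]
      exact hj2 x'
    have h2pos : 0 < μ A' / 2 := ENNReal.div_pos hpos'.ne' ENNReal.ofNat_ne_top
    obtain ⟨i, hi⟩ := (hto0.eventually_lt_const h2pos).exists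
    have hle := hmax i A' (hadm_i i)
    have hfin : μ A' < μ A' :=
      lt_of_le_of_lt hle (lt_of_lt_of_le
        (ENNReal.mul_lt_mul_right two_ne_zero ENNReal.ofNat_ne_top hi)
        ENNReal.mul_div_le)
    exact absurd hfin (lt_irrefl _)

end Aux

theorem pettis_null_of_small_averages {Ω E : Type*} [MeasurableSpace Ω]
    [NormedAddCommGroup E] [NormedSpace ℝ E] [CompleteSpace E]
    (μ : Measure Ω) [IsProbabilityMeasure μ]
    (f : ℕ → Ω → E) (hf : ∀ k, Integrable (f k) μ)
    -- Pettis uniform integrability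
    (hui : ∀ ε : ℝ, 0 < ε → ∃ c : ℝ, ∀ k, ∀ x' : StrongDual ℝ E, ‖x'‖ ≤ 1 →
      ∫ ω in {ω | c ≤ |x' (f k ω)|}, |x' (f k ω)| ∂μ ≤ ε)
    (h : ∀ k : ℕ → ℕ, StrictMono k → ∀ ε : ℝ, 0 < ε →
      ∀ B : Set Ω, MeasurableSet B → 0 < μ B →
      ∃ A ⊆ B, MeasurableSet A ∧ 0 < μ A ∧
        Filter.liminf (fun j =>
          ⨆ x' : {x' : StrongDual ℝ E // ‖x'‖ ≤ 1},
            (∫ ω in A, |x'.1 (f (k j) ω)| ∂μ) / (μ A).toReal) Filter.atTop < ε) :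
    Filter.Tendsto (fun k => pettisNorm μ (f k)) Filter.atTop (nhds 0) := by
  by_contra hcon
  rw [Metric.tendsto_atTop] at hcon
  push_neg at hcon
  obtain ⟨ε, hε, hcon⟩ := hcon
  have hnonneg : ∀ n, 0 ≤ pettisNorm μ (f n) := fun n =>
    Real.iSup_nonneg fun x' => integral_nonneg fun ω => abs_nonneg _
  have hfreq : ∃ᶠ n in Filter.atTop, ε ≤ pettisNorm μ (f n) := by
    rw [Filter.frequently_atTop]
    intro N
    obtain ⟨n, hn1, hn2⟩ := hcon N
    refine ⟨n, hn1, ?_⟩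
    rwa [Real.dist_eq, sub_zero, abs_of_nonneg (hnonneg n)] at hn2
  obtain ⟨φ, hφ, hP⟩ := Filter.extraction_of_frequently_atTop hfreq
  obtain ⟨j, hj⟩ := key hf hui h hε hφ
  exact absurd hj (not_lt.mpr (hP j))
end
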